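/- arXiv:1209.0016 — 3 statements merged into one kernel-verified Lean document; each statement's English description precedes it below -/
import Mathlib

section
/- Let M ⊂ ℝ^p be compact and connected, satisfying the regularity assumption with some modulus c. Fix x_0 ∈ M and let F_1^0 = {f ∈ F_1 : f(x_0) = 0}. Then there is a constant C > 0 such that for all 0 < η ≤ 1, log N_∞(F_1^0, η) ≤ C ( log(1/η) + N(M, η/C) ), where N(M, ε) is the minimal number of Euclidean balls of radius ε needed to cover M, and N_∞(F_1^0, η) is the minimal number of balls of radius η in supremum norm needed to cover F_1^0. -/
open MeasureTheory Metric Filter ProbabilityTheory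

noncomputable section

/-- Euclidean space ℝ^p. -/
abbrev Euc (p : ℕ) := EuclideanSpace ℝ (Fin p)

/-- Intrinsic (shortest-path) metric on a subset `M` of ℝ^p. -/
def intrinsicDist {p : ℕ} (M : Set (Euc p)) (x x' : Euc p) : ℝ :=
  sInf {T : ℝ | 0 ≤ T ∧ ∃ γ : ℝ → Euc p,
    LipschitzOnWith 1 γ (Set.Icc 0 T) ∧ (∀ t ∈ Set.Icc (0:ℝ) T, γ t ∈ M) ∧
    γ 0 = x ∧ γ T = x'}

/-- Intrinsic diameter of `M`. -/
def idiam {p : ℕ} (M : Set (Euc p)) : ℝ :=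
  sSup (Set.image2 (intrinsicDist M) M M)

/-- `M` satisfies the regularity assumption with modulus `c`. -/
def RegularityAssumption {p : ℕ} (M : Set (Euc p)) (c : ℝ → ℝ) : Prop :=
  (∀ r, 0 ≤ c r) ∧ MonotoneOn c (Set.Ici 0) ∧
    Tendsto c (nhdsWithin 0 (Set.Ioi 0)) (nhds 0) ∧
    ∀ x ∈ M, ∀ x' ∈ M, intrinsicDist M x x' ≤ (1 + c ‖x - x'‖) * ‖x - x'‖

/-- The class `F_L` of `L`-Lipschitz maps (w.r.t. the intrinsic metric on `M`). -/
def FL {p : ℕ} (M : Set (Euc p)) (L : ℝ) : Set (Euc p → Euc p) :=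
  {f | ∀ x ∈ M, ∀ x' ∈ M, ‖f x - f x'‖ ≤ L * intrinsicDist M x x'}

/-- Continuum energy of `f` w.r.t. `μ`. -/
def energy {p : ℕ} (μ : Measure (Euc p)) (f : Euc p → Euc p) : ℝ :=
  ∫ x, ∫ x', ‖f x - f x'‖ ^ 2 ∂μ ∂μ

/-- Discrete energy of a configuration `y = (y_1, …, y_n)`. -/
def denergy {p n : ℕ} (y : Fin n → Euc p) : ℝ :=
  (1 / ((n : ℝ) * ((n : ℝ) - 1))) *
    ∑ i : Fin n, ∑ j : Fin n, if i ≠ j then ‖y i - y j‖ ^ 2 else 0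

/-- The MVU constraint set `𝒴_{n,r}` for the data `x`. -/
def Ynr {p n : ℕ} (x : Fin n → Euc p) (r : ℝ) : Set (Fin n → Euc p) :=
  {y | ∀ i j, ‖x i - x j‖ ≤ r → ‖y i - y j‖ ≤ ‖x i - x j‖}

end

/-- Euclidean covering number of a set `M ⊂ ℝ^p`. -/
noncomputable def coverNumSet {p : ℕ} (M : Set (Euc p)) (ε : ℝ) : ℕ :=
  sInf {N : ℕ | ∃ T : Finset (Euc p), T.card = N ∧ ∀ x ∈ M, ∃ z ∈ T, ‖x - z‖ ≤ ε}

/-- Covering number of a class of functions `G` for the supremum norm over `M`. -/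
noncomputable def coverNumF {p : ℕ} (G : Set (Euc p → Euc p)) (M : Set (Euc p)) (ε : ℝ) : ℕ :=
  sInf {N : ℕ | ∃ T : Finset (Euc p → Euc p), T.card = N ∧
    ∀ f ∈ G, ∃ g ∈ T, ∀ x ∈ M, ‖f x - g x‖ ≤ ε}

namespace EntropyAux

lemma coord_le_norm {p : ℕ} (v : Euc p) (i : Fin p) : |v i| ≤ ‖v‖ := by
  rw [EuclideanSpace.norm_eq]
  have h1 : |v i| = Real.sqrt (|v i| ^ 2) := by rw [Real.sqrt_sq_eq_abs, abs_abs]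
  rw [h1]
  apply Real.sqrt_le_sqrt
  exact Finset.single_le_sum (f := fun j => ‖v j‖ ^ 2) (fun j _ => by positivity)
    (Finset.mem_univ i)

lemma log_nat_mono {a b : ℕ} (h : a ≤ b) : Real.log a ≤ Real.log b := by
  rcases Nat.eq_zero_or_pos a with h0 | h0
  · simp [h0, Real.log_natCast_nonneg]
  · exact Real.log_le_log (by exact_mod_cast h0) (by exact_mod_cast h)

noncomputable def qz {p : ℕ} (h : ℝ) (v : Euc p) : Euc p :=
  (WithLp.equiv 2 (Fin p → ℝ)).symm (fun i => h * (round (v i / h) : ℤ))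

lemma qz_apply {p : ℕ} (h : ℝ) (v : Euc p) (i : Fin p) :
    qz h v i = h * (round (v i / h) : ℤ) := rfl

lemma qz_sub_le {p : ℕ} {h : ℝ} (hh : 0 < h) (v : Euc p) :
    ‖v - qz h v‖ ≤ (p + 1) * h / 2 := by
  have hcoord : ∀ i : Fin p, |(v - qz h v) i| ≤ h / 2 := by
    intro i
    have h2 : (v - qz h v) i = v i - h * (round (v i / h) : ℤ) := rfl
    have h3 : v i - h * (round (v i / h) : ℤ) = h * (v i / h - (round (v i / h) : ℤ)) := by
      field_simp
    rw [h2, h3, abs_mul, abs_of_pos hh]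
    have h4 : |v i / h - (round (v i / h) : ℤ)| ≤ 1 / 2 := abs_sub_round _
    nlinarith [abs_nonneg (v i / h - (round (v i / h) : ℤ))]
  rw [EuclideanSpace.norm_eq]
  have hsum : ∑ i : Fin p, ‖(v - qz h v) i‖ ^ 2 ≤ p * (h / 2) ^ 2 := by
    calc ∑ i : Fin p, ‖(v - qz h v) i‖ ^ 2
        ≤ ∑ _i : Fin p, (h / 2) ^ 2 := by
          refine Finset.sum_le_sum fun i _ => ?_
          rw [Real.norm_eq_abs]
          have := hcoord i
          nlinarith [abs_nonneg ((v - qz h v) i)]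
      _ = p * (h / 2) ^ 2 := by
          rw [Finset.sum_const, Finset.card_univ, Fintype.card_fin, nsmul_eq_mul]
  calc Real.sqrt (∑ i : Fin p, ‖(v - qz h v) i‖ ^ 2)
      ≤ Real.sqrt ((p : ℝ) * (h / 2) ^ 2) := Real.sqrt_le_sqrt hsum
    _ ≤ (p + 1) * h / 2 := by
        have h5 : ((p : ℝ) * (h / 2) ^ 2) ≤ ((p + 1) * h / 2) ^ 2 := by
          nlinarith [hh.le, sq_nonneg ((p:ℝ) * h)]
        have h6 := Real.sqrt_le_sqrt h5
        rwa [Real.sqrt_sq (by positivity)] at h6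

noncomputable def latt (p : ℕ) (h : ℝ) (K : ℤ) : Finset (Euc p) := by
  classical
  exact (Fintype.piFinset fun _ : Fin p => Finset.Icc (-K) K).image
    (fun m : Fin p → ℤ => (WithLp.equiv 2 (Fin p → ℝ)).symm (fun i => h * (m i : ℝ)))

lemma latt_card (p : ℕ) (h : ℝ) (K : ℤ) : (latt p h K).card ≤ ((2 * K + 1).toNat) ^ p := by
  classical
  calc (latt p h K).card ≤ (Fintype.piFinset fun _ : Fin p => Finset.Icc (-K) K).card :=
        Finset.card_image_le
    _ = ∏ _i : Fin p, (Finset.Icc (-K) K).card := Fintype.card_piFinset _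
    _ = ((2 * K + 1).toNat) ^ p := by
        rw [Finset.prod_const, Finset.card_univ, Fintype.card_fin, Int.card_Icc]
        congr 1
        ring_nf

lemma mem_latt {p : ℕ} {h : ℝ} (hh : 0 < h) {K : ℤ} (v : Euc p)
    (hv : ∀ i, ∃ n : ℤ, v i = h * n) (hnorm : ‖v‖ ≤ h * K) : v ∈ latt p h K := by
  classical
  choose n hn using hv
  refine Finset.mem_image.2 ⟨n, ?_, ?_⟩
  · refine Fintype.mem_piFinset.2 fun i => Finset.mem_Icc.2 ?_
    have hcoord : |v i| ≤ h * K := le_trans (coord_le_norm v i) hnorm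
    rw [hn i, abs_mul, abs_of_pos hh] at hcoord
    have h2 : |(n i : ℝ)| ≤ (K : ℝ) := le_of_mul_le_mul_left hcoord hh
    rw [← Int.cast_abs, Int.cast_le] at h2
    exact abs_le.1 h2
  · ext i
    rw [hn i]; rfl

lemma chain_enum {p : ℕ} {M : Set (Euc p)} (hconn : IsPreconnected M)
    {s : Finset (Euc p)} (hsM : ∀ z ∈ s, z ∈ M) {ρ : ℝ} (hρ : 0 < ρ)
    (hcov : ∀ x ∈ M, ∃ z ∈ s, ‖x - z‖ ≤ ρ / 3) :
    ∃ e : Fin s.card → Euc p, Function.Injective e ∧ (∀ k, e k ∈ s) ∧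
      ∀ k : Fin s.card, (k : ℕ) ≠ 0 → ∃ j : Fin s.card, j < k ∧ ‖e k - e j‖ ≤ ρ := by
  classical
  have conn : ∀ A : Finset (Euc p), A.Nonempty → A ⊆ s → A ≠ s →
      ∃ w ∈ s, w ∉ A ∧ ∃ z ∈ A, ‖w - z‖ ≤ ρ := by
    intro A hAne hAs hAner
    by_contra hcon
    push_neg at hcon
    set U : Set (Euc p) := ⋃ z ∈ A, Metric.ball z (ρ / 2) with hU
    set V : Set (Euc p) := ⋃ z ∈ (s \ A), Metric.ball z (ρ / 2) with hV
    have hUo : IsOpen U := isOpen_biUnion fun _ _ => Metric.isOpen_ball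
    have hVo : IsOpen V := isOpen_biUnion fun _ _ => Metric.isOpen_ball
    have hsub : M ⊆ U ∪ V := by
      intro x hx
      obtain ⟨z, hz, hzx⟩ := hcov x hx
      have hxz : x ∈ Metric.ball z (ρ / 2) := by
        rw [Metric.mem_ball, dist_eq_norm]; linarith
      by_cases hzA : z ∈ A
      · exact Or.inl (Set.mem_biUnion hzA hxz)
      · exact Or.inr (Set.mem_biUnion (Finset.mem_sdiff.2 ⟨hz, hzA⟩) hxz)
    have hUne : (M ∩ U).Nonempty := by
      obtain ⟨a, ha⟩ := hAne
      exact ⟨a, hsM a (hAs ha), Set.mem_biUnion ha (Metric.mem_ball_self (by linarith))⟩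
    have hVne : (M ∩ V).Nonempty := by
      obtain ⟨w, hws, hwA⟩ := (Finset.ssubset_iff_of_subset hAs).1
        (lt_of_le_of_ne hAs hAner)
      exact ⟨w, hsM w hws, Set.mem_biUnion (Finset.mem_sdiff.2 ⟨hws, hwA⟩)
        (Metric.mem_ball_self (by linarith))⟩
    obtain ⟨x, hxM, hxU, hxV⟩ := hconn U V hUo hVo hsub hUne hVne
    obtain ⟨z, hzA, hxz⟩ := Set.mem_iUnion₂.1 hxU
    obtain ⟨w, hwsA, hxw⟩ := Set.mem_iUnion₂.1 hxV
    rw [Metric.mem_ball, dist_eq_norm] at hxz hxw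
    obtain ⟨hws, hwA⟩ := Finset.mem_sdiff.1 hwsA
    have hlt := hcon w hws hwA z hzA
    have htri : ‖w - z‖ ≤ ‖w - x‖ + ‖x - z‖ := by
      have := norm_add_le (w - x) (x - z)
      simpa using this
    have hwx : ‖w - x‖ = ‖x - w‖ := norm_sub_rev _ _
    linarith
  have main : ∀ m, m ≤ s.card → ∃ e : Fin m → Euc p, Function.Injective e ∧
      (∀ k, e k ∈ s) ∧
      ∀ k : Fin m, (k : ℕ) ≠ 0 → ∃ j : Fin m, j < k ∧ ‖e k - e j‖ ≤ ρ := by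
    intro m
    induction m with
    | zero => exact fun _ => ⟨Fin.elim0, fun a => a.elim0, fun a => a.elim0, fun a => a.elim0⟩
    | succ n ih =>
      intro hn1
      rcases Nat.eq_zero_or_pos n with hn0 | hnpos
      · subst hn0
        have hsne : s.Nonempty := Finset.card_pos.1 (by omega)
        obtain ⟨z, hz⟩ := hsne
        refine ⟨fun _ => z, fun a b _ => Fin.ext (by omega), fun _ => hz, ?_⟩
        intro k hk
        exact absurd (by omega : (k : ℕ) = 0) hk
      · obtain ⟨e, hinj, hmem, hchain⟩ := ih (by omega)
        set A : Finset (Euc p) := Finset.image e Finset.univ with hA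
        have hAne : A.Nonempty := ⟨e ⟨0, hnpos⟩, Finset.mem_image_of_mem _ (Finset.mem_univ _)⟩
        have hAs : A ⊆ s := by
          intro z hz
          obtain ⟨k, _, rfl⟩ := Finset.mem_image.1 hz
          exact hmem k
        have hAcard : A.card = n := by
          rw [hA, Finset.card_image_of_injective _ hinj, Finset.card_univ, Fintype.card_fin]
        have hAns : A ≠ s := by
          intro hEq
          rw [hEq] at hAcard
          omega
        obtain ⟨w, hws, hwA, z, hzA, hwz⟩ := conn A hAne hAs hAns
        obtain ⟨j₀, _, hj₀⟩ := Finset.mem_image.1 hzA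
        refine ⟨Fin.snoc e w, ?_, ?_, ?_⟩
        · intro a b hab
          rcases Fin.eq_castSucc_or_eq_last a with ⟨a', rfl⟩ | rfl <;>
            rcases Fin.eq_castSucc_or_eq_last b with ⟨b', rfl⟩ | rfl
          · rw [Fin.snoc_castSucc, Fin.snoc_castSucc] at hab
            exact congrArg Fin.castSucc (hinj hab)
          · rw [Fin.snoc_castSucc, Fin.snoc_last] at hab
            exact absurd (hab ▸ Finset.mem_image_of_mem e (Finset.mem_univ a')) hwA
          · rw [Fin.snoc_last, Fin.snoc_castSucc] at hab
            exact absurd (hab ▸ Finset.mem_image_of_mem e (Finset.mem_univ b')) hwA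
          · rfl
        · intro k
          rcases Fin.eq_castSucc_or_eq_last k with ⟨k', rfl⟩ | rfl
          · rw [Fin.snoc_castSucc]; exact hmem k'
          · rw [Fin.snoc_last]; exact hws
        · intro k hk
          rcases Fin.eq_castSucc_or_eq_last k with ⟨k', rfl⟩ | rfl
          · have hk' : (k' : ℕ) ≠ 0 := by simpa using hk
            obtain ⟨j, hjk, hje⟩ := hchain k' hk'
            exact ⟨j.castSucc, Fin.castSucc_lt_castSucc_iff.2 hjk, by
              rw [Fin.snoc_castSucc, Fin.snoc_castSucc]; exact hje⟩
          · refine ⟨j₀.castSucc, Fin.castSucc_lt_last j₀, ?_⟩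
            rw [Fin.snoc_last, Fin.snoc_castSucc, hj₀]
            exact hwz
  exact main s.card le_rfl

end EntropyAux

open EntropyAux

set_option maxHeartbeats 2000000

/-- **Lemma 3.4 (entropy bound for Lipschitz classes).** -/
theorem entropy_bound_lipschitz
    {p : ℕ} (M : Set (Euc p)) (hMcpt : IsCompact M) (hMconn : IsConnected M)
    (c : ℝ → ℝ) (hreg : RegularityAssumption M c)
    (x₀ : Euc p) (hx₀ : x₀ ∈ M) :
    ∃ C > (0 : ℝ), ∀ η : ℝ, 0 < η → η ≤ 1 →
      Real.log (coverNumF {f ∈ FL M 1 | f x₀ = 0} M η) ≤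
        C * (Real.log (1 / η) + (coverNumSet M (η / C) : ℝ)) := by
  classical
  obtain ⟨hc0, hcmono, _, hcineq⟩ := hreg
  have hMb : Bornology.IsBounded M := hMcpt.isBounded
  set c₁ : ℝ := c 1 with hc₁def
  have hc₁0 : 0 ≤ c₁ := hc0 1
  set D₀ : ℝ := Metric.diam M with hD₀def
  have hD₀0 : 0 ≤ D₀ := Metric.diam_nonneg
  have hcD₀ : 0 ≤ c D₀ := hc0 _
  set D : ℝ := (1 + c D₀) * D₀ with hDdef
  have hD0 : 0 ≤ D := by rw [hDdef]; exact mul_nonneg (by linarith) hD₀0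
  have hp0 : (0:ℝ) ≤ (p : ℝ) := Nat.cast_nonneg p
  set A₀ : ℝ := 8 * ((p:ℝ) + 1) * (D + 1) + 3 with hA₀def
  set A₁ : ℝ := 8 * ((p:ℝ) + 1) + 1 with hA₁def
  have hA₀1 : 1 ≤ A₀ := by
    have h8 : 0 ≤ 8 * ((p:ℝ) + 1) * (D + 1) := by positivity
    rw [hA₀def]; linarith
  have hA₁1 : 1 ≤ A₁ := by rw [hA₁def]; linarith
  have hlA₀ : 0 ≤ Real.log A₀ := Real.log_nonneg hA₀1
  have hlA₁ : 0 ≤ Real.log A₁ := Real.log_nonneg hA₁1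
  set C : ℝ := 16 * (1 + c₁) + ((p:ℝ) + 1) * (Real.log A₀ + Real.log A₁ + 1) with hCdef
  have hC16 : 16 * (1 + c₁) ≤ C := by
    have h8 : 0 ≤ ((p:ℝ) + 1) * (Real.log A₀ + Real.log A₁ + 1) := by positivity
    rw [hCdef]; linarith
  have hCp : (p : ℝ) + 1 ≤ C := by
    have h8 : ((p:ℝ)+1) * 1 ≤ ((p:ℝ)+1) * (Real.log A₀ + Real.log A₁ + 1) :=
      mul_le_mul_of_nonneg_left (by linarith) (by linarith)
    rw [hCdef]; linarith
  have hCpos : 0 < C := by linarith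
  refine ⟨C, hCpos, ?_⟩
  intro η hη hη1
  -- intrinsic distance bounds
  have hdelta1 : ∀ x ∈ M, ∀ x' ∈ M, ‖x - x'‖ ≤ 1 →
      intrinsicDist M x x' ≤ (1 + c₁) * ‖x - x'‖ := by
    intro x hx x' hx' hle
    refine le_trans (hcineq x hx x' hx') ?_
    have hmn := hcmono (Set.mem_Ici.2 (norm_nonneg (x - x'))) (Set.mem_Ici.2 zero_le_one) hle
    have hmul := mul_le_mul_of_nonneg_right hmn (norm_nonneg (x - x'))
    linarith [norm_nonneg (x - x')]
  have hdeltaD : ∀ x ∈ M, ∀ x' ∈ M, intrinsicDist M x x' ≤ D := by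
    intro x hx x' hx'
    refine le_trans (hcineq x hx x' hx') ?_
    have hnle : ‖x - x'‖ ≤ D₀ := by
      rw [← dist_eq_norm]
      rw [hD₀def]
      exact Metric.dist_le_diam_of_mem hMb hx hx'
    have hmn := hcmono (Set.mem_Ici.2 (norm_nonneg (x - x'))) (Set.mem_Ici.2 hD₀0) hnle
    rw [hDdef]
    have hmul1 := mul_le_mul_of_nonneg_right hmn (norm_nonneg (x - x'))
    have hmul2 := mul_le_mul_of_nonneg_left hnle hcD₀
    linarith [norm_nonneg (x - x')]
  set G : Set (Euc p → Euc p) := {f ∈ FL M 1 | f x₀ = 0} with hGdef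
  have hfbound : ∀ f ∈ G, ∀ x ∈ M, ‖f x‖ ≤ D := by
    intro f hf x hx
    have h1 : ‖f x - f x₀‖ ≤ 1 * intrinsicDist M x x₀ := hf.1 x hx x₀ hx₀
    rw [hf.2, sub_zero, one_mul] at h1
    exact le_trans h1 (hdeltaD x hx x₀ hx₀)
  have hfinc : ∀ f ∈ G, ∀ x ∈ M, ∀ x' ∈ M, ‖x - x'‖ ≤ 1 →
      ‖f x - f x'‖ ≤ (1 + c₁) * ‖x - x'‖ := by
    intro f hf x hx x' hx' hle
    have h1 : ‖f x - f x'‖ ≤ 1 * intrinsicDist M x x' := hf.1 x hx x' hx'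
    rw [one_mul] at h1
    exact le_trans h1 (hdelta1 x hx x' hx' hle)
  set ε : ℝ := η / C with hεdef
  have hεpos : 0 < ε := div_pos hη hCpos
  have hCne : C ≠ 0 := ne_of_gt hCpos
  have hCε : C * ε = η := by rw [hεdef]; field_simp
  have hε16 : 16 * (1 + c₁) * ε ≤ η := by
    have h1 : 16 * (1 + c₁) * ε ≤ C * ε := mul_le_mul_of_nonneg_right hC16 hεpos.le
    linarith [hCε]
  have hε6 : 6 * ε ≤ 1 := by
    have h8 : 0 ≤ c₁ * ε := mul_nonneg hc₁0 hεpos.le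
    linarith
  -- covering number of M realized
  set N : ℕ := coverNumSet M ε with hNdef
  have hSne : {n : ℕ | ∃ T : Finset (Euc p), T.card = n ∧
      ∀ x ∈ M, ∃ z ∈ T, ‖x - z‖ ≤ ε}.Nonempty := by
    obtain ⟨t, htfin, htcov⟩ := (totallyBounded_iff.1 hMcpt.totallyBounded) ε hεpos
    refine ⟨htfin.toFinset.card, htfin.toFinset, rfl, ?_⟩
    intro x hx
    obtain ⟨y, hy, hxy⟩ := Set.mem_iUnion₂.1 (htcov hx)
    exact ⟨y, htfin.mem_toFinset.2 hy, by rw [← dist_eq_norm]; exact (Metric.mem_ball.1 hxy).le⟩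
  have hNmem : N ∈ {n : ℕ | ∃ T : Finset (Euc p), T.card = n ∧
      ∀ x ∈ M, ∃ z ∈ T, ‖x - z‖ ≤ ε} := by
    rw [hNdef, coverNumSet]
    exact Nat.sInf_mem hSne
  obtain ⟨T₀, hT₀card, hT₀cov⟩ := hNmem
  have hN1 : 1 ≤ N := by
    by_contra hcontra
    have hN0 : N = 0 := by omega
    have hT₀e : T₀ = ∅ := Finset.card_eq_zero.1 (by rw [hT₀card, hN0])
    obtain ⟨z, hz, _⟩ := hT₀cov x₀ hx₀
    simp [hT₀e] at hz
  -- net inside M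
  set w' : Euc p → Euc p := fun z =>
    if hz : ∃ x ∈ M, ‖x - z‖ ≤ ε then hz.choose else x₀ with hw'def
  set s : Finset (Euc p) := T₀.image w' with hsdef
  have hsM : ∀ z ∈ s, z ∈ M := by
    intro z hz
    obtain ⟨u, hu, rfl⟩ := Finset.mem_image.1 hz
    by_cases hex : ∃ x ∈ M, ‖x - u‖ ≤ ε
    · have : w' u = hex.choose := by simp only [hw'def]; exact dif_pos hex
      rw [this]; exact hex.choose_spec.1
    · have : w' u = x₀ := by simp only [hw'def]; exact dif_neg hex
      rw [this]; exact hx₀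
  have hscov : ∀ x ∈ M, ∃ z ∈ s, ‖x - z‖ ≤ 2 * ε := by
    intro x hx
    obtain ⟨u, hu, hxu⟩ := hT₀cov x hx
    have hex : ∃ y ∈ M, ‖y - u‖ ≤ ε := ⟨x, hx, hxu⟩
    refine ⟨w' u, Finset.mem_image_of_mem _ hu, ?_⟩
    have hw : w' u = hex.choose := by simp only [hw'def]; exact dif_pos hex
    rw [hw]
    have htri : ‖x - hex.choose‖ ≤ ‖x - u‖ + ‖u - hex.choose‖ := by
      have := norm_add_le (x - u) (u - hex.choose)
      simpa using this
    have h2 : ‖u - hex.choose‖ = ‖hex.choose - u‖ := norm_sub_rev _ _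
    have h3 := hex.choose_spec.2
    linarith
  have hscard : s.card ≤ N := by
    rw [hsdef, ← hT₀card]
    exact Finset.card_image_le
  have hsne : s.Nonempty := by
    obtain ⟨z, hz, _⟩ := hscov x₀ hx₀
    exact ⟨z, hz⟩
  -- chain enumeration
  have hcov3 : ∀ x ∈ M, ∃ z ∈ s, ‖x - z‖ ≤ (6 * ε) / 3 := by
    intro x hx
    obtain ⟨z, hz, hxz⟩ := hscov x hx
    exact ⟨z, hz, by linarith⟩
  obtain ⟨e, heinj, hes, hechain⟩ := EntropyAux.chain_enum hMconn.isPreconnected hsM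
    (by positivity : (0:ℝ) < 6 * ε) hcov3
  have hm1 : 0 < s.card := Finset.card_pos.2 hsne
  have hsrange : ∀ z ∈ s, ∃ k : Fin s.card, e k = z := by
    intro z hz
    have himg : Finset.image e Finset.univ = s := by
      apply Finset.eq_of_subset_of_card_le
      · intro y hy
        obtain ⟨k, _, rfl⟩ := Finset.mem_image.1 hy
        exact hes k
      · rw [Finset.card_image_of_injective _ heinj, Finset.card_univ, Fintype.card_fin]
    rw [← himg] at hz
    obtain ⟨k, _, hk⟩ := Finset.mem_image.1 hz
    exact ⟨k, hk⟩
  -- parent function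
  set par : Fin s.card → Fin s.card := fun k =>
    if hk : (k : ℕ) = 0 then k else (hechain k hk).choose with hpardef
  have hpar : ∀ k : Fin s.card, (k : ℕ) ≠ 0 →
      ((par k : ℕ) < (k : ℕ)) ∧ ‖e k - e (par k)‖ ≤ 6 * ε := by
    intro k hk
    have hpk : par k = (hechain k hk).choose := by simp only [hpardef]; exact dif_neg hk
    rw [hpk]
    obtain ⟨h1, h2⟩ := (hechain k hk).choose_spec
    exact ⟨h1, h2⟩
  -- quantization scale
  set τ : ℝ := η / (4 * ((p:ℝ) + 1)) with hτdef
  have hτpos : 0 < τ := by rw [hτdef]; positivity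
  have hq8 : ∀ v : Euc p, ‖v - qz τ v‖ ≤ η / 8 := by
    intro v
    have h1 := qz_sub_le hτpos v
    have heq : ((p : ℝ) + 1) * τ / 2 = η / 8 := by
      rw [hτdef]
      have : ((p:ℝ) + 1) ≠ 0 := by positivity
      field_simp
      ring
    linarith
  set K₀ : ℤ := ⌈(D + 1) / τ⌉ with hK₀def
  set K₁ : ℤ := 4 * ((p:ℤ) + 1) with hK₁def
  have hK₁cast : ((K₁ : ℝ)) = 4 * ((p:ℝ) + 1) := by rw [hK₁def]; push_cast; ring
  have hτK₁ : τ * (K₁ : ℝ) = η := by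
    rw [hK₁cast, hτdef]
    have : ((p:ℝ) + 1) ≠ 0 := by positivity
    field_simp
  have hK₀0 : (0:ℤ) ≤ K₀ := by rw [hK₀def]; exact Int.ceil_nonneg (by positivity)
  have hτK₀ : D + 1 ≤ τ * (K₀ : ℝ) := by
    have h1 : (D + 1) / τ ≤ (K₀ : ℝ) := by rw [hK₀def]; exact Int.le_ceil _
    have h2 : τ * ((D + 1) / τ) ≤ τ * (K₀:ℝ) := mul_le_mul_of_nonneg_left h1 hτpos.le
    have h3 : τ * ((D + 1) / τ) = D + 1 := by field_simp
    linarith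
  set B₀ : Finset (Euc p) := EntropyAux.latt p τ K₀ with hB₀def
  set B₁ : Finset (Euc p) := EntropyAux.latt p τ K₁ with hB₁def
  set k0 : Fin s.card := ⟨0, hm1⟩ with hk0def
  have hk00 : (k0 : ℕ) = 0 := by rw [hk0def]
  set cp : (Euc p → Euc p) → Euc p × (Fin s.card → Euc p) := fun f =>
    (qz τ (f (e k0)),
      fun k => if (k : ℕ) = 0 then 0 else qz τ (f (e k)) - qz τ (f (e (par k)))) with hcpdef
  have hcpmem : ∀ f ∈ G, cp f ∈ B₀ ×ˢ Fintype.piFinset (fun _ : Fin s.card => B₁) := by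
    intro f hf
    rw [Finset.mem_product]
    constructor
    · have hfst : (cp f).1 = qz τ (f (e k0)) := by simp only [hcpdef]
      rw [hfst]
      apply EntropyAux.mem_latt hτpos
      · intro i; exact ⟨_, rfl⟩
      · have h1 : ‖f (e k0)‖ ≤ D := hfbound f hf (e k0) (hsM _ (hes k0))
        have h2 := hq8 (f (e k0))
        have h3 : ‖qz τ (f (e k0))‖ = ‖f (e k0) - (f (e k0) - qz τ (f (e k0)))‖ := by
          rw [sub_sub_cancel]
        rw [h3]
        have h4 := norm_sub_le (f (e k0)) (f (e k0) - qz τ (f (e k0)))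
        linarith [hτK₀, hη1]
    · rw [Fintype.mem_piFinset]
      intro k
      by_cases hk : (k : ℕ) = 0
      · have hval : (cp f).2 k = 0 := by simp only [hcpdef, if_pos hk]
        rw [hval]
        apply EntropyAux.mem_latt hτpos
        · intro i; exact ⟨0, by simp⟩
        · rw [norm_zero, hτK₁]; exact hη.le
      · have hval : (cp f).2 k = qz τ (f (e k)) - qz τ (f (e (par k))) := by
          simp only [hcpdef, if_neg hk]
        rw [hval]
        apply EntropyAux.mem_latt hτpos
        · intro i
          refine ⟨round (f (e k) i / τ) - round (f (e (par k)) i / τ), ?_⟩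
          have hsubi : (qz τ (f (e k)) - qz τ (f (e (par k)))) i
              = qz τ (f (e k)) i - qz τ (f (e (par k))) i := rfl
          rw [hsubi, qz_apply, qz_apply]
          push_cast
          ring
        · obtain ⟨hlt, hclose⟩ := hpar k hk
          have hfi : ‖f (e k) - f (e (par k))‖ ≤ (1 + c₁) * ‖e k - e (par k)‖ :=
            hfinc f hf _ (hsM _ (hes k)) _ (hsM _ (hes (par k))) (le_trans hclose hε6)
          have h2 := hq8 (f (e k))
          have h3 := hq8 (f (e (par k)))
          have hdecomp : qz τ (f (e k)) - qz τ (f (e (par k))) =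
              (f (e k) - f (e (par k))) - (f (e k) - qz τ (f (e k)))
                + (f (e (par k)) - qz τ (f (e (par k)))) := by abel
          have hstep : ‖f (e k) - f (e (par k))‖ ≤ (1 + c₁) * (6 * ε) :=
            le_trans hfi (mul_le_mul_of_nonneg_left hclose (by linarith))
          rw [hdecomp, hτK₁]
          have t1 := norm_add_le ((f (e k) - f (e (par k))) - (f (e k) - qz τ (f (e k))))
            (f (e (par k)) - qz τ (f (e (par k))))
          have t2 := norm_sub_le (f (e k) - f (e (par k))) (f (e k) - qz τ (f (e k)))
          have h9 : 0 ≤ c₁ * ε := mul_nonneg hc₁0 hεpos.le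
          linarith [hε16, hη.le]
  set rep : Euc p × (Fin s.card → Euc p) → (Euc p → Euc p) := fun w =>
    if hw : ∃ f, f ∈ G ∧ cp f = w then hw.choose else fun _ => 0 with hrepdef
  set T : Finset (Euc p → Euc p) :=
    (B₀ ×ˢ Fintype.piFinset (fun _ : Fin s.card => B₁)).image rep with hTdef
  have hcover : ∀ f ∈ G, ∃ g ∈ T, ∀ x ∈ M, ‖f x - g x‖ ≤ η := by
    intro f hf
    refine ⟨rep (cp f), by rw [hTdef]; exact Finset.mem_image_of_mem _ (hcpmem f hf), ?_⟩
    have hex : ∃ f', f' ∈ G ∧ cp f' = cp f := ⟨f, hf, rfl⟩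
    have hrep : rep (cp f) = hex.choose := by simp only [hrepdef]; exact dif_pos hex
    obtain ⟨hgG, hgcp⟩ := hex.choose_spec
    rw [hrep]
    have h1 : qz τ (hex.choose (e k0)) = qz τ (f (e k0)) := congrArg Prod.fst hgcp
    have h2 : ∀ k : Fin s.card, (k : ℕ) ≠ 0 →
        qz τ (hex.choose (e k)) - qz τ (hex.choose (e (par k)))
          = qz τ (f (e k)) - qz τ (f (e (par k))) := by
      intro k hk
      have h3 := congrFun (congrArg Prod.snd hgcp) k
      simp only [hcpdef, if_neg hk] at h3
      exact h3
    have key : ∀ n : ℕ, ∀ k : Fin s.card, (k : ℕ) ≤ n →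
        qz τ (hex.choose (e k)) = qz τ (f (e k)) := by
      intro n
      induction n with
      | zero =>
        intro k hk
        have : k = k0 := Fin.ext (by omega)
        rw [this]; exact h1
      | succ n ih =>
        intro k hk
        by_cases hk0 : (k : ℕ) = 0
        · have : k = k0 := Fin.ext (by omega)
          rw [this]; exact h1
        · have hp2 := h2 k hk0
          have hlt := (hpar k hk0).1
          have hple : ((par k : ℕ)) ≤ n := by omega
          have hpe := ih (par k) hple
          rw [hpe] at hp2
          exact sub_left_inj.1 hp2
    have keyk : ∀ k : Fin s.card, qz τ (hex.choose (e k)) = qz τ (f (e k)) :=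
      fun k => key k k le_rfl
    have hnet : ∀ z ∈ s, ‖f z - hex.choose z‖ ≤ η / 4 := by
      intro z hz
      obtain ⟨k, rfl⟩ := hsrange z hz
      have hq1 := hq8 (f (e k))
      have hq2 := hq8 (hex.choose (e k))
      have hdec : f (e k) - hex.choose (e k) =
          (f (e k) - qz τ (f (e k))) - (hex.choose (e k) - qz τ (hex.choose (e k))) := by
        rw [keyk k]; abel
      rw [hdec]
      have := norm_sub_le (f (e k) - qz τ (f (e k)))
        (hex.choose (e k) - qz τ (hex.choose (e k)))
      linarith
    intro x hx
    obtain ⟨z, hzs, hxz⟩ := hscov x hx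
    have hzM := hsM z hzs
    have hxz1 : ‖x - z‖ ≤ 1 := by linarith
    have hfx : ‖f x - f z‖ ≤ (1 + c₁) * (2 * ε) :=
      le_trans (hfinc f hf x hx z hzM hxz1) (mul_le_mul_of_nonneg_left hxz (by linarith))
    have hgx : ‖hex.choose x - hex.choose z‖ ≤ (1 + c₁) * (2 * ε) :=
      le_trans (hfinc _ hgG x hx z hzM hxz1) (mul_le_mul_of_nonneg_left hxz (by linarith))
    have hfz := hnet z hzs
    have hdec : f x - hex.choose x =
        (f x - f z) + (f z - hex.choose z) + (hex.choose z - hex.choose x) := by abel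
    rw [hdec]
    have t1 := norm_add_le ((f x - f z) + (f z - hex.choose z)) (hex.choose z - hex.choose x)
    have t2 := norm_add_le (f x - f z) (f z - hex.choose z)
    have t3 : ‖hex.choose z - hex.choose x‖ = ‖hex.choose x - hex.choose z‖ := norm_sub_rev _ _
    have h9 : 0 ≤ c₁ * ε := mul_nonneg hc₁0 hεpos.le
    linarith [hε16, hη.le]
  have hcovF : coverNumF G M η ≤ T.card := by
    rw [coverNumF]
    exact Nat.sInf_le ⟨T, rfl, hcover⟩
  set n₀ : ℕ := (2 * K₀ + 1).toNat with hn₀def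
  set n₁ : ℕ := (2 * K₁ + 1).toNat with hn₁def
  have hTcard : T.card ≤ n₀ ^ p * (n₁ ^ p) ^ s.card := by
    calc T.card ≤ (B₀ ×ˢ Fintype.piFinset (fun _ : Fin s.card => B₁)).card := by
          rw [hTdef]; exact Finset.card_image_le
      _ = B₀.card * ∏ _k : Fin s.card, B₁.card := by
          rw [Finset.card_product, Fintype.card_piFinset]
      _ = B₀.card * B₁.card ^ s.card := by
          rw [Finset.prod_const, Finset.card_univ, Fintype.card_fin]
      _ ≤ n₀ ^ p * (n₁ ^ p) ^ s.card := by
          refine Nat.mul_le_mul ?_ (Nat.pow_le_pow_left ?_ s.card)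
          · rw [hB₀def, hn₀def]; exact EntropyAux.latt_card p τ K₀
          · rw [hB₁def, hn₁def]; exact EntropyAux.latt_card p τ K₁
  have hK₁0 : (0:ℤ) ≤ K₁ := by rw [hK₁def]; positivity
  have hn₀1 : 1 ≤ n₀ := by rw [hn₀def]; omega
  have hn₁1 : 1 ≤ n₁ := by rw [hn₁def]; omega
  have hn₀cast : (n₀ : ℝ) = 2 * (K₀:ℝ) + 1 := by
    have h0 : (((2 * K₀ + 1).toNat : ℤ) : ℝ) = ((2 * K₀ + 1 : ℤ) : ℝ) := by
      rw [Int.toNat_of_nonneg (by omega)]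
    rw [hn₀def]
    push_cast at h0 ⊢
    linarith
  have hn₁cast : (n₁ : ℝ) = A₁ := by
    have h0 : (((2 * K₁ + 1).toNat : ℤ) : ℝ) = ((2 * K₁ + 1 : ℤ) : ℝ) := by
      rw [Int.toNat_of_nonneg (by omega)]
    rw [hn₁def, hA₁def]
    push_cast at h0 ⊢
    rw [h0, hK₁cast]
    ring
  have hn₀r : (n₀ : ℝ) ≤ A₀ / η := by
    rw [le_div_iff₀ hη]
    have hceil : (K₀ : ℝ) < (D + 1) / τ + 1 := by rw [hK₀def]; exact Int.ceil_lt_add_one _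
    have hDh : (D + 1) / τ = 4 * ((p:ℝ) + 1) * (D + 1) / η := by
      rw [hτdef]
      have h1 : ((p:ℝ) + 1) ≠ 0 := by positivity
      have h2 : η ≠ 0 := ne_of_gt hη
      field_simp
    have hY0 : 0 ≤ 4 * ((p:ℝ) + 1) * (D + 1) := by positivity
    have hYe : 4 * ((p:ℝ) + 1) * (D + 1) / η * η = 4 * ((p:ℝ) + 1) * (D + 1) := by
      field_simp
    have h3 : (n₀ : ℝ) ≤ 2 * (4 * ((p:ℝ) + 1) * (D + 1) / η) + 3 := by
      rw [hn₀cast, ← hDh]; linarith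
    have h4 : (n₀:ℝ) * η ≤ (2 * (4 * ((p:ℝ) + 1) * (D + 1) / η) + 3) * η :=
      mul_le_mul_of_nonneg_right h3 hη.le
    rw [hA₀def]
    have h5 : (2 * (4 * ((p:ℝ) + 1) * (D + 1) / η) + 3) * η
        = 2 * (4 * ((p:ℝ) + 1) * (D + 1) / η * η) + 3 * η := by ring
    rw [h5, hYe] at h4
    linarith
  -- log computations
  have hn₀pos : (0:ℝ) < (n₀:ℝ) := by exact_mod_cast hn₀1
  have hn₁pos : (0:ℝ) < (n₁:ℝ) := by exact_mod_cast hn₁1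
  have hlog1 : Real.log (coverNumF G M η) ≤ Real.log ((n₀ ^ p * (n₁ ^ p) ^ s.card : ℕ)) :=
    EntropyAux.log_nat_mono (le_trans hcovF hTcard)
  have hlog2 : Real.log (((n₀ ^ p * (n₁ ^ p) ^ s.card : ℕ) : ℝ))
      = p * Real.log n₀ + s.card * ((p:ℝ) * Real.log n₁) := by
    push_cast
    rw [Real.log_mul (by positivity) (by positivity), Real.log_pow, Real.log_pow, Real.log_pow]
  have hL0 : 0 ≤ Real.log (1 / η) := Real.log_nonneg (by
    rw [le_div_iff₀ hη]; linarith)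
  have hlogn₀ : Real.log (n₀:ℝ) ≤ Real.log A₀ + Real.log (1 / η) := by
    have h1 := Real.log_le_log hn₀pos hn₀r
    rw [Real.log_div (by linarith : A₀ ≠ 0) (ne_of_gt hη)] at h1
    rw [one_div, Real.log_inv]
    linarith
  have hlogn₁ : Real.log (n₁:ℝ) = Real.log A₁ := by rw [hn₁cast]
  have hNr : (1:ℝ) ≤ (N:ℝ) := by exact_mod_cast hN1
  have hmN : (s.card:ℝ) ≤ (N:ℝ) := by exact_mod_cast hscard
  calc Real.log (coverNumF G M η)
      ≤ (p:ℝ) * Real.log (n₀:ℝ) + (s.card:ℝ) * ((p:ℝ) * Real.log (n₁:ℝ)) := by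
        rw [← hlog2]; exact hlog1
    _ ≤ (p:ℝ) * (Real.log A₀ + Real.log (1 / η)) + (N:ℝ) * ((p:ℝ) * Real.log A₁) := by
        refine add_le_add (mul_le_mul_of_nonneg_left hlogn₀ hp0) ?_
        rw [hlogn₁]
        exact mul_le_mul_of_nonneg_right hmN (by positivity)
    _ ≤ C * (Real.log (1 / η) + (N:ℝ)) := by
        have hC2 : ((p:ℝ)) * Real.log A₀ + ((p:ℝ)) * Real.log A₁ ≤ C := by
          rw [hCdef]
          have h8 : 0 ≤ c₁ := hc₁0
          have h9 : 0 ≤ (p:ℝ) * Real.log A₀ := mul_nonneg hp0 hlA₀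
          have h10 : 0 ≤ (p:ℝ) * Real.log A₁ := mul_nonneg hp0 hlA₁
          have h11 : ((p:ℝ)+1) * (Real.log A₀ + Real.log A₁ + 1)
              = (p:ℝ) * Real.log A₀ + (p:ℝ) * Real.log A₁ + (p:ℝ)
                + Real.log A₀ + Real.log A₁ + 1 := by ring
          rw [h11]
          linarith
        have e1 : (p:ℝ) * Real.log (1/η) ≤ C * Real.log (1/η) :=
          mul_le_mul_of_nonneg_right (by linarith) hL0
        have e2 : (p:ℝ) * Real.log A₀ + (N:ℝ) * ((p:ℝ) * Real.log A₁) ≤ C * (N:ℝ) := by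
          have f1 : (p:ℝ) * Real.log A₀ ≤ ((p:ℝ) * Real.log A₀) * (N:ℝ) :=
            le_mul_of_one_le_right (by positivity) hNr
          have f4 : ((p:ℝ) * Real.log A₀ + (p:ℝ) * Real.log A₁) * (N:ℝ) ≤ C * (N:ℝ) :=
            mul_le_mul_of_nonneg_right hC2 (by linarith)
          calc (p:ℝ) * Real.log A₀ + (N:ℝ) * ((p:ℝ) * Real.log A₁)
              ≤ ((p:ℝ) * Real.log A₀) * (N:ℝ) + (N:ℝ) * ((p:ℝ) * Real.log A₁) :=
                add_le_add f1 le_rfl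
            _ = ((p:ℝ) * Real.log A₀ + (p:ℝ) * Real.log A₁) * (N:ℝ) := by ring
            _ ≤ C * (N:ℝ) := f4
        calc (p:ℝ) * (Real.log A₀ + Real.log (1 / η)) + (N:ℝ) * ((p:ℝ) * Real.log A₁)
            = (p:ℝ) * Real.log (1 / η)
              + ((p:ℝ) * Real.log A₀ + (N:ℝ) * ((p:ℝ) * Real.log A₁)) := by ring
          _ ≤ C * Real.log (1 / η) + C * (N:ℝ) := add_le_add e1 e2
          _ = C * (Real.log (1 / η) + (N:ℝ)) := by ring
end

section
/- Let M ⊂ ℝ^p be compact and connected, and suppose there is a bijection ψ : M → D onto a compact convex set D ⊂ ℝ^d (identified with ℝ^d × {0}^{p−d} ⊂ ℝ^p) such that ‖ψ(x)−ψ(x')‖ = δ_M(x,x') for all x, x' ∈ M. Let μ be a Borel probability measure with support M satisfying: there exists α > 0 such that μ(B(x,η)) ≥ α·vol_d(B(x,η) ∩ M) for all x ∈ M and η > 0, where vol_d is the d-dimensional Hausdorff measure and d the Hausdorff dimension of M. Then the set S_1 of maximizers of E over F_1 equals { ζ∘ψ : ζ is a Euclidean isometry of ℝ^p }. -/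
open MeasureTheory Metric Filter ProbabilityTheory

section AuxEnergy

open MeasureTheory Metric

variable {p : ℕ}

lemma aux_int (μ : Measure (Euc p)) [IsFiniteMeasure μ] {M : Set (Euc p)}
    (hae : ∀ᵐ x ∂μ, x ∈ M) {k : Euc p → ℝ} (hk : AEStronglyMeasurable k μ) {C : ℝ}
    (hC : ∀ x ∈ M, ‖k x‖ ≤ C) : Integrable k μ :=
  (integrable_const C).mono' hk (hae.mono fun x hx => hC x hx)

lemma aux_energy_congr (μ : Measure (Euc p)) {M : Set (Euc p)}
    (hae : ∀ᵐ x ∂μ, x ∈ M) {g G : Euc p → Euc p} (hEq : Set.EqOn g G M) :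
    energy μ g = energy μ G := by
  have h1 : ∀ x : Euc p, (∫ x', ‖g x - g x'‖ ^ 2 ∂μ) = ∫ x', ‖g x - G x'‖ ^ 2 ∂μ := fun x =>
    integral_congr_ae (hae.mono fun x' hx' => by simp only [hEq hx'])
  unfold energy
  rw [show (fun x => ∫ x', ‖g x - g x'‖ ^ 2 ∂μ) = fun x => ∫ x', ‖g x - G x'‖ ^ 2 ∂μ from
    funext h1]
  exact integral_congr_ae (hae.mono fun x hx => by simp only [hEq hx])

lemma aux_intG (μ : Measure (Euc p)) [IsProbabilityMeasure μ] {M : Set (Euc p)}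
    (hMcpt : IsCompact M) (hae : ∀ᵐ x ∂μ, x ∈ M) {G : Euc p → Euc p} (hGc : Continuous G)
    {C : ℝ} (hC : ∀ x ∈ M, ‖G x‖ ≤ C) :
    (∀ x, Integrable (fun x' => ‖G x - G x'‖ ^ 2) μ) ∧
      Integrable (fun x => ∫ x', ‖G x - G x'‖ ^ 2 ∂μ) μ := by
  have hnorm : ∀ (y : Euc p), ‖‖y‖ ^ (2:ℕ)‖ = ‖y‖ ^ 2 := fun y => by
    rw [norm_pow, norm_norm]
  have hint : ∀ x, Integrable (fun x' => ‖G x - G x'‖ ^ 2) μ := by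
    intro x
    refine aux_int μ hae (Continuous.aestronglyMeasurable (by fun_prop)) (C := (‖G x‖ + C) ^ 2)
      fun x' hx' => ?_
    rw [hnorm]
    refine pow_le_pow_left₀ (norm_nonneg _) ?_ 2
    exact (norm_sub_le _ _).trans (add_le_add_right (hC x' hx') _)
  refine ⟨hint, ?_⟩
  have hmeas : StronglyMeasurable fun x => ∫ x', ‖G x - G x'‖ ^ 2 ∂μ :=
    (Continuous.stronglyMeasurable
      (show Continuous fun q : Euc p × Euc p => ‖G q.1 - G q.2‖ ^ 2 by fun_prop)).integral_prod_right'
  refine aux_int μ hae hmeas.aestronglyMeasurable (C := (C + C) ^ 2) fun x hx => ?_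
  have hb : ∀ᵐ x' ∂μ, ‖‖G x - G x'‖ ^ 2‖ ≤ (C + C) ^ 2 := by
    refine hae.mono fun x' hx' => ?_
    rw [hnorm]
    refine pow_le_pow_left₀ (norm_nonneg _) ?_ 2
    exact (norm_sub_le _ _).trans (add_le_add (hC x hx) (hC x' hx'))
  have := norm_integral_le_of_norm_le_const hb
  simpa [measure_univ] using this

lemma aux_energy_le (μ : Measure (Euc p)) [IsProbabilityMeasure μ] {M : Set (Euc p)}
    (hMcpt : IsCompact M) (hae : ∀ᵐ x ∂μ, x ∈ M) {G H : Euc p → Euc p}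
    (hGc : Continuous G) (hHc : Continuous H)
    (hGH : ∀ x ∈ M, ∀ x' ∈ M, ‖G x - G x'‖ ≤ ‖H x - H x'‖) :
    energy μ G ≤ energy μ H := by
  obtain ⟨C₁, hC₁⟩ := hMcpt.exists_bound_of_continuousOn hGc.continuousOn
  obtain ⟨C₂, hC₂⟩ := hMcpt.exists_bound_of_continuousOn hHc.continuousOn
  obtain ⟨iG, oG⟩ := aux_intG μ hMcpt hae hGc hC₁
  obtain ⟨iH, oH⟩ := aux_intG μ hMcpt hae hHc hC₂
  unfold energy
  refine integral_mono_ae oG oH (hae.mono fun x hx => ?_)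
  exact integral_mono_ae (iG x) (iH x)
    (hae.mono fun x' hx' => pow_le_pow_left₀ (norm_nonneg _) (hGH x hx x' hx') 2)

set_option maxHeartbeats 1000000 in
lemma aux_energy_lt (μ : Measure (Euc p)) [IsProbabilityMeasure μ] {M : Set (Euc p)}
    (hMcpt : IsCompact M) (hae : ∀ᵐ x ∂μ, x ∈ M) {G H : Euc p → Euc p}
    (hGc : Continuous G) (hHc : Continuous H)
    (hGH : ∀ x ∈ M, ∀ x' ∈ M, ‖G x - G x'‖ ≤ ‖H x - H x'‖)
    {x₀ x₀' : Euc p} (hx₀ : x₀ ∈ M) (hx₀' : x₀' ∈ M)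
    (hlt : ‖G x₀ - G x₀'‖ < ‖H x₀ - H x₀'‖)
    (hball : ∀ ε > (0:ℝ), 0 < μ (ball x₀ ε)) (hball' : ∀ ε > (0:ℝ), 0 < μ (ball x₀' ε)) :
    energy μ G < energy μ H := by
  obtain ⟨C₁, hC₁⟩ := hMcpt.exists_bound_of_continuousOn hGc.continuousOn
  obtain ⟨C₂, hC₂⟩ := hMcpt.exists_bound_of_continuousOn hHc.continuousOn
  obtain ⟨iG, oG⟩ := aux_intG μ hMcpt hae hGc hC₁
  obtain ⟨iH, oH⟩ := aux_intG μ hMcpt hae hHc hC₂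
  set ε : ℝ := (‖H x₀ - H x₀'‖ ^ 2 - ‖G x₀ - G x₀'‖ ^ 2) / 2 with hεdef
  have hsq : ‖G x₀ - G x₀'‖ ^ 2 < ‖H x₀ - H x₀'‖ ^ 2 :=
    pow_lt_pow_left₀ hlt (norm_nonneg _) two_ne_zero
  have hε0 : 0 < ε := by rw [hεdef]; linarith
  have hcont : Continuous fun q : Euc p × Euc p => ‖H q.1 - H q.2‖ ^ 2 - ‖G q.1 - G q.2‖ ^ 2 := by
    fun_prop
  have hmem : {q : Euc p × Euc p | ε < ‖H q.1 - H q.2‖ ^ 2 - ‖G q.1 - G q.2‖ ^ 2} ∈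
      nhds (x₀, x₀') := by
    refine (isOpen_lt continuous_const hcont).mem_nhds ?_
    show ε < ‖H x₀ - H x₀'‖ ^ 2 - ‖G x₀ - G x₀'‖ ^ 2
    rw [hεdef]; linarith
  rw [nhds_prod_eq] at hmem
  obtain ⟨A, hA, B, hB, hsub⟩ := Filter.mem_prod_iff.mp hmem
  obtain ⟨r₁, hr₁, hball₁⟩ := Metric.mem_nhds_iff.mp hA
  obtain ⟨r₂, hr₂, hball₂⟩ := Metric.mem_nhds_iff.mp hB
  set r : ℝ := min r₁ r₂ with hrdef
  have hr0 : 0 < r := lt_min hr₁ hr₂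
  have key : ∀ x ∈ ball x₀ r, ∀ x' ∈ ball x₀' r,
      ε ≤ ‖H x - H x'‖ ^ 2 - ‖G x - G x'‖ ^ 2 := by
    intro x hx x' hx'
    have hxA : x ∈ A := hball₁ (ball_subset_ball (min_le_left _ _) hx)
    have hxB : x' ∈ B := hball₂ (ball_subset_ball (min_le_right _ _) hx')
    have h2 := hsub (Set.mk_mem_prod hxA hxB)
    simp only [Set.mem_setOf_eq] at h2
    linarith
  clear hsub hball₁ hball₂ hA hB hmem hcont
  clear A B
  set c₂ : ℝ := (μ (ball x₀' r)).toReal * ε with hc₂def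
  have hμ' : 0 < (μ (ball x₀' r)).toReal :=
    ENNReal.toReal_pos (hball' r hr0).ne' (measure_ne_top μ _)
  have hμ : 0 < (μ (ball x₀ r)).toReal :=
    ENNReal.toReal_pos (hball r hr0).ne' (measure_ne_top μ _)
  have innerlt : ∀ x ∈ M, x ∈ ball x₀ r →
      (∫ x', ‖G x - G x'‖ ^ 2 ∂μ) + c₂ ≤ ∫ x', ‖H x - H x'‖ ^ 2 ∂μ := by
    intro x hx hxb
    have hind : Integrable ((ball x₀' r).indicator fun _ => ε) μ :=
      (integrable_const ε).indicator measurableSet_ball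
    have hle : (∫ x', (‖G x - G x'‖ ^ 2 + (ball x₀' r).indicator (fun _ => ε) x') ∂μ) ≤
        ∫ x', ‖H x - H x'‖ ^ 2 ∂μ := by
      refine integral_mono_ae ((iG x).add hind) (iH x) (hae.mono fun x' hx' => ?_)
      by_cases hmem' : x' ∈ ball x₀' r
      · simp only [Set.indicator_of_mem hmem']
        have := key x hxb x' hmem'
        linarith
      · simp only [Set.indicator_of_notMem hmem', add_zero]
        exact pow_le_pow_left₀ (norm_nonneg _) (hGH x hx x' hx') 2
    rwa [integral_add (iG x) hind, integral_indicator_const ε measurableSet_ball,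
      smul_eq_mul] at hle
  have hindb : Integrable ((ball x₀ r).indicator fun _ => c₂) μ :=
    (integrable_const c₂).indicator measurableSet_ball
  have outer : (∫ x, ((∫ x', ‖G x - G x'‖ ^ 2 ∂μ) + (ball x₀ r).indicator (fun _ => c₂) x) ∂μ) ≤
      ∫ x, ∫ x', ‖H x - H x'‖ ^ 2 ∂μ ∂μ := by
    refine integral_mono_ae (oG.add hindb) oH (hae.mono fun x hx => ?_)
    by_cases hmem' : x ∈ ball x₀ r
    · simp only [Set.indicator_of_mem hmem']
      exact innerlt x hx hmem'
    · simp only [Set.indicator_of_notMem hmem', add_zero]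
      exact integral_mono_ae (iG x) (iH x)
        (hae.mono fun x' hx' => pow_le_pow_left₀ (norm_nonneg _) (hGH x hx x' hx') 2)
  rw [integral_add oG hindb, integral_indicator_const c₂ measurableSet_ball, smul_eq_mul] at outer
  have hpos : 0 < (μ (ball x₀ r)).toReal * c₂ := mul_pos hμ (mul_pos hμ' hε0)
  unfold energy
  rw [measureReal_def] at outer
  linarith

end AuxEnergy

set_option maxHeartbeats 1000000 in
/-- **Theorem 4.1 (consistency under the convexity assumption).**  If `M` is isometric (via
`ψ`, for the intrinsic metric) to a compact convex set `D ⊂ ℝ^d × {0}^{p−d} ⊂ ℝ^p`, and `μ`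
dominates the `d`-dimensional Hausdorff measure on `M` (where `d` is the Hausdorff dimension
of `M`), then the maximizers of the continuum energy over `F_1` are exactly the maps of the
form `ζ ∘ ψ` with `ζ` a Euclidean isometry of `ℝ^p` (as functions on `M`). -/
theorem continuum_mvu_convex_consistency
    {p d : ℕ} (hdp : d ≤ p)
    (μ : Measure (Euc p)) [IsProbabilityMeasure μ]
    (M : Set (Euc p)) (hMcpt : IsCompact M) (hMconn : IsConnected M)
    (hMfull : μ M = 1)
    (hMsupp : ∀ x ∈ M, ∀ ε > 0, 0 < μ (Metric.ball x ε))
    (D : Set (Euc p)) (hDcpt : IsCompact D) (hDconv : Convex ℝ D)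
    (hDsub : ∀ z ∈ D, ∀ i : Fin p, d ≤ (i : ℕ) → z i = 0)
    (ψ : Euc p → Euc p) (hψbij : Set.BijOn ψ M D)
    (hψiso : ∀ x ∈ M, ∀ x' ∈ M, ‖ψ x - ψ x'‖ = intrinsicDist M x x')
    (hdimH : dimH M = d)
    (α : ℝ) (hα : 0 < α)
    (hdens : ∀ x ∈ M, ∀ η > (0 : ℝ),
      ENNReal.ofReal α * μH[(d : ℝ)] (Metric.closedBall x η ∩ M) ≤
        μ (Metric.closedBall x η)) :
    ∀ f : Euc p → Euc p,
      (f ∈ FL M 1 ∧ ∀ g ∈ FL M 1, energy μ g ≤ energy μ f) ↔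
      ∃ ζ : Euc p → Euc p, Isometry ζ ∧ Set.EqOn f (ζ ∘ ψ) M := by
  -- basic setup
  have hMne : M.Nonempty := hMconn.nonempty
  have hMclosed : IsClosed M := hMcpt.isClosed
  have hcompl : μ Mᶜ = 0 := by
    rw [measure_compl hMclosed.measurableSet (by simp [hMfull]), measure_univ, hMfull, tsub_self]
  have hae : ∀ᵐ x ∂μ, x ∈ M := by
    have h1 : {a : Euc p | ¬ a ∈ M} = Mᶜ := rfl
    rw [MeasureTheory.ae_iff, h1]
    exact hcompl
  -- the euclidean norm is a lower bound for the intrinsic distance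
  have hlow : ∀ x ∈ M, ∀ x' ∈ M, ‖x - x'‖ ≤ ‖ψ x - ψ x'‖ := by
    intro x hx x' hx'
    rcases eq_or_ne x x' with rfl | hne
    · simp
    set A := {T : ℝ | 0 ≤ T ∧ ∃ γ : ℝ → Euc p, LipschitzOnWith 1 γ (Set.Icc 0 T) ∧
      (∀ t ∈ Set.Icc (0:ℝ) T, γ t ∈ M) ∧ γ 0 = x ∧ γ T = x'} with hA
    have hδ : intrinsicDist M x x' = sInf A := rfl
    have hle : ∀ T ∈ A, ‖x - x'‖ ≤ T := by
      rintro T ⟨hT0, γ, hγlip, hγmem, hγ0, hγT⟩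
      have h1 := hγlip.dist_le_mul 0 (Set.left_mem_Icc.mpr hT0) T (Set.right_mem_Icc.mpr hT0)
      rw [hγ0, hγT] at h1
      rw [← dist_eq_norm]
      calc dist x x' ≤ 1 * dist (0:ℝ) T := by simpa using h1
        _ = T := by rw [one_mul, Real.dist_eq, zero_sub, abs_neg, abs_of_nonneg hT0]
    by_cases hABne : A.Nonempty
    · rw [hψiso x hx x' hx', hδ]
      exact le_csInf hABne hle
    · exfalso
      have h0 : intrinsicDist M x x' = 0 := by
        rw [hδ, Set.not_nonempty_iff_eq_empty.mp hABne, Real.sInf_empty]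
      have h1 := hψiso x hx x' hx'
      rw [h0, norm_sub_eq_zero_iff] at h1
      exact hne (hψbij.injOn hx hx' h1)
  -- inverse of ψ
  haveI : Nonempty (Euc p) := ⟨0⟩
  set χ : Euc p → Euc p := Function.invFunOn ψ M with hχdef
  have hχmem : ∀ z ∈ D, χ z ∈ M := by
    intro z hz
    obtain ⟨a, ha, rfl⟩ := hψbij.surjOn hz
    rw [hχdef]
    exact Function.invFunOn_apply_mem (f := ψ) (s := M) ha
  have hψχ : ∀ z ∈ D, ψ (χ z) = z := by
    intro z hz
    obtain ⟨a, ha, rfl⟩ := hψbij.surjOn hz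
    rw [hχdef]
    exact Function.invFunOn_apply_eq (f := ψ) (s := M) ha
  have hχψ : ∀ x ∈ M, χ (ψ x) = x := fun x hx => hψbij.injOn.leftInvOn_invFunOn hx
  -- continuity of ψ on M
  have hψcont : ContinuousOn ψ M := by
    let e : ↥M ≃ ↥D := Set.BijOn.equiv ψ hψbij
    have he : ∀ x : ↥M, (e x : Euc p) = ψ (x : Euc p) := fun _ => rfl
    have hsymm : ∀ z : ↥D, ψ ((e.symm z : Euc p)) = (z : Euc p) := by
      intro z
      have h1 := congrArg (Subtype.val) (e.apply_symm_apply z)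
      exact (he (e.symm z)).symm.trans h1
    have hlip : LipschitzWith 1 (fun z : ↥D => e.symm z) := by
      refine LipschitzWith.of_dist_le_mul fun z z' => ?_
      simp only [NNReal.coe_one, one_mul, Subtype.dist_eq, dist_eq_norm]
      have h1 := hlow _ (e.symm z).2 _ (e.symm z').2
      rwa [hsymm z, hsymm z'] at h1
    haveI : CompactSpace ↥D := isCompact_iff_compactSpace.mp hDcpt
    let h : ↥D ≃ₜ ↥M := Continuous.homeoOfEquivCompactToT2 (f := e.symm) hlip.continuous
    rw [continuousOn_iff_continuous_restrict]
    exact continuous_subtype_val.comp h.symm.continuous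
  -- Tietze extension
  have hext : ∀ g : Euc p → Euc p, ContinuousOn g M →
      ∃ G : Euc p → Euc p, Continuous G ∧ Set.EqOn g G M := by
    intro g hg
    obtain ⟨G, hG⟩ := ContinuousMap.exists_restrict_eq (X := Euc p) hMclosed
      (ContinuousMap.mk (M.restrict g) (continuousOn_iff_continuous_restrict.mp hg))
    exact ⟨G, G.continuous, fun x hx => (DFunLike.congr_fun hG ⟨x, hx⟩).symm⟩
  obtain ⟨Ψ, hΨc, hΨeq⟩ := hext ψ hψcont
  -- functions in FL are continuous on M
  have hFLcont : ∀ g ∈ FL M 1, ContinuousOn g M := by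
    intro g hg x hx
    rw [Metric.continuousWithinAt_iff]
    intro ε hε
    obtain ⟨δ, hδ0, hδ⟩ := Metric.continuousWithinAt_iff.mp (hψcont x hx) ε hε
    refine ⟨δ, hδ0, fun y hy hyd => ?_⟩
    have h1 : dist (g y) (g x) ≤ dist (ψ y) (ψ x) := by
      rw [dist_eq_norm, dist_eq_norm]
      calc ‖g y - g x‖ ≤ 1 * intrinsicDist M y x := hg y hy x hx
        _ = ‖ψ y - ψ x‖ := by rw [one_mul]; exact (hψiso y hy x hx).symm
    exact lt_of_le_of_lt h1 (hδ hy hyd)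
  have hψFL : ψ ∈ FL M 1 := fun x hx x' hx' => by rw [one_mul]; exact (hψiso x hx x' hx').le
  intro f
  constructor
  · rintro ⟨hfFL, hfmax⟩
    obtain ⟨F, hFc, hFeq⟩ := hext f (hFLcont f hfFL)
    have hfle : ∀ x ∈ M, ∀ x' ∈ M, ‖f x - f x'‖ ≤ ‖ψ x - ψ x'‖ := by
      intro x hx x' hx'
      rw [hψiso x hx x' hx']
      simpa using hfFL x hx x' hx'
    have hFle : ∀ x ∈ M, ∀ x' ∈ M, ‖F x - F x'‖ ≤ ‖Ψ x - Ψ x'‖ := by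
      intro x hx x' hx'
      rw [← hFeq hx, ← hFeq hx', ← hΨeq hx, ← hΨeq hx']
      exact hfle x hx x' hx'
    have heqf : energy μ f = energy μ F := aux_energy_congr μ hae hFeq
    have heqψ : energy μ ψ = energy μ Ψ := aux_energy_congr μ hae hΨeq
    have hmax' : energy μ Ψ ≤ energy μ F := by
      rw [← heqf, ← heqψ]; exact hfmax ψ hψFL
    have hEqNorm : ∀ x ∈ M, ∀ x' ∈ M, ‖f x - f x'‖ = ‖ψ x - ψ x'‖ := by
      intro x hx x' hx'
      by_contra hne
      have hstrict : ‖F x - F x'‖ < ‖Ψ x - Ψ x'‖ := by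
        rw [← hFeq hx, ← hFeq hx', ← hΨeq hx, ← hΨeq hx']
        exact lt_of_le_of_ne (hfle x hx x' hx') hne
      have hltE := aux_energy_lt μ hMcpt hae hFc hΨc hFle hx hx' hstrict
        (hMsupp x hx) (hMsupp x' hx')
      linarith
    -- construction of the isometry
    obtain ⟨x₀, hx₀⟩ := hMne
    set z₀ : Euc p := ψ x₀ with hz₀
    have hz₀D : z₀ ∈ D := hψbij.mapsTo hx₀
    set S : Set (Euc p) := (fun z => z - z₀) '' D with hS
    set φ : Euc p → Euc p := fun v => f (χ (v + z₀)) - f (χ z₀) with hφ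
    have hSD : ∀ v ∈ S, v + z₀ ∈ D := by
      rintro v ⟨z, hz, rfl⟩
      have h1 : z - z₀ + z₀ = z := by abel
      rw [h1]; exact hz
    have h0S : (0:Euc p) ∈ S := ⟨z₀, hz₀D, sub_self z₀⟩
    have hφdist : ∀ v ∈ S, ∀ w ∈ S, ‖φ v - φ w‖ = ‖v - w‖ := by
      intro v hv w hw
      have hv' := hSD v hv
      have hw' := hSD w hw
      have h1 : φ v - φ w = f (χ (v + z₀)) - f (χ (w + z₀)) := by
        simp only [hφ]; abel
      rw [h1, hEqNorm _ (hχmem _ hv') _ (hχmem _ hw'), hψχ _ hv', hψχ _ hw',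
        add_sub_add_right_eq_sub]
    have hφ0 : φ 0 = 0 := by simp only [hφ, zero_add, sub_self]
    have hφnorm : ∀ v ∈ S, ‖φ v‖ = ‖v‖ := by
      intro v hv
      have h1 := hφdist v hv 0 h0S
      rwa [hφ0, sub_zero, sub_zero] at h1
    have hφinner : ∀ v ∈ S, ∀ w ∈ S, (inner ℝ (φ v) (φ w) : ℝ) = inner ℝ v w := by
      intro v hv w hw
      have h1 := norm_sub_sq_real (φ v) (φ w)
      have h2 := norm_sub_sq_real v w
      rw [hφdist v hv w hw, hφnorm v hv, hφnorm w hw] at h1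
      linarith
    obtain ⟨b, hbS, hbspan, hbli⟩ := exists_linearIndependent ℝ S
    set W : Submodule ℝ (Euc p) := Submodule.span ℝ (Set.range ((↑) : b → Euc p)) with hWdef
    have hW : W = Submodule.span ℝ S := by rw [hWdef, Subtype.range_coe, hbspan]
    set B : Module.Basis b ℝ W := Module.Basis.span hbli with hB
    set T : W →ₗ[ℝ] Euc p := B.constr ℝ (fun i : b => φ (i : Euc p)) with hT
    have hBval : ∀ i : b, ((B i : W) : Euc p) = (i : Euc p) := fun i => congrArg Subtype.val (Module.Basis.span_apply hbli i)
    have hTB : ∀ i : b, T (B i) = φ (i : Euc p) := fun i => by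
      simp only [hT, Module.Basis.constr_basis]
    have stepA : ∀ s ∈ S, ∀ w : W, (inner ℝ (φ s) (T w) : ℝ) = inner ℝ s (w : Euc p) := by
      intro s hs
      have hfg : (innerₗ (Euc p) (φ s)) ∘ₗ T = (innerₗ (Euc p) s) ∘ₗ W.subtype := by
        refine B.ext fun i => ?_
        simp only [LinearMap.comp_apply, innerₗ_apply_apply, hTB i, Submodule.subtype_apply, hBval i]
        exact hφinner s hs (i : Euc p) (hbS i.2)
      intro w
      simpa using LinearMap.congr_fun hfg w
    have stepB : ∀ u w : W, (inner ℝ (T u) (T w) : ℝ) = inner ℝ (u : Euc p) (w : Euc p) := by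
      intro u
      have hfg : (innerₗ (Euc p) (T u)) ∘ₗ T = (innerₗ (Euc p) (u : Euc p)) ∘ₗ W.subtype := by
        refine B.ext fun i => ?_
        simp only [LinearMap.comp_apply, innerₗ_apply_apply, hTB i, Submodule.subtype_apply, hBval i]
        rw [real_inner_comm, stepA (i : Euc p) (hbS i.2) u]
        exact real_inner_comm _ _
      intro w
      simpa using LinearMap.congr_fun hfg w
    have hnormT : ∀ w : W, ‖T w‖ = ‖w‖ := by
      intro w
      have h1 : ‖T w‖ ^ 2 = ‖(w : Euc p)‖ ^ 2 := by
        rw [← real_inner_self_eq_norm_sq, stepB w w, real_inner_self_eq_norm_sq]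
      have h2 : ‖T w‖ = ‖(w : Euc p)‖ := by
        nlinarith [norm_nonneg (T w), norm_nonneg ((w : Euc p))]
      rw [h2]; rfl
    set L : W →ₗᵢ[ℝ] Euc p := ⟨T, hnormT⟩ with hL
    have hEs : ∀ s, ∀ hs : s ∈ S, L.extend s = φ s := by
      intro s hs
      have hsW : s ∈ W := hW.symm ▸ Submodule.subset_span hs
      have h1 : L.extend s = T ⟨s, hsW⟩ := L.extend_apply ⟨s, hsW⟩
      have ha : ‖T ⟨s, hsW⟩‖ = ‖s‖ := by rw [hnormT]; rfl
      have hb : (inner ℝ (T ⟨s, hsW⟩) (φ s) : ℝ) = ‖s‖ ^ 2 := by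
        rw [← real_inner_comm, stepA s hs ⟨s, hsW⟩]
        exact real_inner_self_eq_norm_sq s
      have hc : ‖φ s‖ = ‖s‖ := hφnorm s hs
      have h2 : ‖T ⟨s, hsW⟩ - φ s‖ ^ 2 = 0 := by
        rw [norm_sub_sq_real, ha, hb, hc]; ring
      have h3 : ‖T ⟨s, hsW⟩ - φ s‖ ≤ 0 := by
        nlinarith [norm_nonneg (T ⟨s, hsW⟩ - φ s)]
      have h4 : T ⟨s, hsW⟩ - φ s = 0 := by
        rw [← norm_eq_zero]; exact le_antisymm h3 (norm_nonneg _)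
      rw [h1, ← sub_eq_zero]
      exact h4
    refine ⟨fun v => L.extend (v - z₀) + f (χ z₀), ?_, ?_⟩
    · refine Isometry.of_dist_eq fun a c => ?_
      rw [dist_eq_norm, dist_eq_norm]
      have h1 : (L.extend (a - z₀) + f (χ z₀)) - (L.extend (c - z₀) + f (χ z₀)) =
          L.extend (a - z₀) - L.extend (c - z₀) := by abel
      rw [h1, ← map_sub, sub_sub_sub_cancel_right, L.extend.norm_map]
    · intro x hx
      have hxD : ψ x ∈ D := hψbij.mapsTo hx
      have hxS : ψ x - z₀ ∈ S := ⟨ψ x, hxD, rfl⟩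
      show f x = L.extend (ψ x - z₀) + f (χ z₀)
      rw [hEs _ hxS]
      simp only [hφ]
      have h1 : ψ x - z₀ + z₀ = ψ x := by abel
      rw [h1, hχψ x hx]
      abel
  · rintro ⟨ζ, hζ, hfeq⟩
    have hζnorm : ∀ a c : Euc p, ‖ζ a - ζ c‖ = ‖a - c‖ := fun a c => by
      have h1 := hζ.dist_eq a c
      rwa [dist_eq_norm, dist_eq_norm] at h1
    have hfFL : f ∈ FL M 1 := by
      intro x hx x' hx'
      rw [hfeq hx, hfeq hx']
      show ‖ζ (ψ x) - ζ (ψ x')‖ ≤ 1 * intrinsicDist M x x'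
      rw [hζnorm, hψiso x hx x' hx', one_mul]
    refine ⟨hfFL, fun g hg => ?_⟩
    obtain ⟨G, hGc, hGeq⟩ := hext g (hFLcont g hg)
    have hFc : Continuous (fun x => ζ (Ψ x)) := hζ.continuous.comp hΨc
    have hFeq : Set.EqOn f (fun x => ζ (Ψ x)) M := by
      intro x hx
      rw [hfeq hx]
      show ζ (ψ x) = ζ (Ψ x)
      rw [hΨeq hx]
    have h1 : energy μ g = energy μ G := aux_energy_congr μ hae hGeq
    have h2 : energy μ f = energy μ (fun x => ζ (Ψ x)) := aux_energy_congr μ hae hFeq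
    rw [h1, h2]
    refine aux_energy_le μ hMcpt hae hGc hFc ?_
    intro x hx x' hx'
    have h3 : ‖ζ (Ψ x) - ζ (Ψ x')‖ = ‖ψ x - ψ x'‖ := by
      rw [hζnorm, ← hΨeq hx, ← hΨeq hx']
    rw [← hGeq hx, ← hGeq hx', h3, hψiso x hx x' hx']
    simpa using hg x hx x' hx'
end

section
/- Let μ be a Borel probability measure on ℝ^p whose support M is compact, connected, and satisfies the regularity assumption with some modulus c, and let x_1, x_2, … be i.i.d. samples from μ. Then sup_{f ∈ F_1} | E(Y_n(f)) − E(f) | → 0 almost surely as n → ∞. -/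
open MeasureTheory Metric Filter ProbabilityTheory

open scoped RealInnerProductSpace Topology

noncomputable section
noncomputable def pApprox {p : ℕ} (δ : ℝ) : List (Euc p × Euc p) → Euc p → Euc p
  | [] => fun _ => 0
  | zw :: rest => fun x => if dist x zw.1 < δ then zw.2 else pApprox δ rest x

lemma pApprox_measurable {p : ℕ} (δ : ℝ) (L : List (Euc p × Euc p)) :
    Measurable (pApprox δ L) := by
  induction L with
  | nil => exact measurable_const
  | cons zw rest ih =>
    exact Measurable.ite (measurableSet_ball (x := zw.1) (ε := δ)) measurable_const ih

lemma pApprox_norm_le {p : ℕ} (δ : ℝ) {D : ℝ} (hD : 0 ≤ D) (L : List (Euc p × Euc p))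
    (hL : ∀ zw ∈ L, ‖zw.2‖ ≤ D) (x : Euc p) : ‖pApprox δ L x‖ ≤ D := by
  induction L with
  | nil => simpa [pApprox] using hD
  | cons zw rest ih =>
    by_cases hx : dist x zw.1 < δ
    · rw [show pApprox δ (zw :: rest) x = if dist x zw.1 < δ then zw.2 else pApprox δ rest x
        from rfl, if_pos hx]
      exact hL zw (by simp)
    · rw [show pApprox δ (zw :: rest) x = if dist x zw.1 < δ then zw.2 else pApprox δ rest x
        from rfl, if_neg hx]
      exact ih fun z hz => hL z (by simp [hz])

lemma pApprox_exists {p : ℕ} (δ : ℝ) (L : List (Euc p × Euc p)) (x : Euc p)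
    (hx : ∃ zw ∈ L, dist x zw.1 < δ) :
    ∃ zw ∈ L, dist x zw.1 < δ ∧ pApprox δ L x = zw.2 := by
  induction L with
  | nil => simp at hx
  | cons zw rest ih =>
    by_cases h : dist x zw.1 < δ
    · refine ⟨zw, by simp, h, ?_⟩
      rw [show pApprox δ (zw :: rest) x = if dist x zw.1 < δ then zw.2 else pApprox δ rest x
        from rfl, if_pos h]
    · obtain ⟨z', hz', hball⟩ := hx
      rcases List.mem_cons.1 hz' with rfl | hz''
      · exact absurd hball h
      · obtain ⟨z'', h1, h2, h3⟩ := ih ⟨z', hz'', hball⟩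
        refine ⟨z'', List.mem_cons_of_mem _ h1, h2, ?_⟩
        rw [show pApprox δ (zw :: rest) x = if dist x zw.1 < δ then zw.2 else pApprox δ rest x
          from rfl, if_neg h]
        exact h3

lemma measurable_indicator_of_closed {p : ℕ} {M : Set (Euc p)} (hM : IsClosed M)
    {h : Euc p → Euc p} (hc : ContinuousOn h M) : Measurable (M.indicator h) := by
  apply measurable_of_isOpen
  intro U hU
  obtain ⟨V, hV, hVeq⟩ := continuousOn_iff'.1 hc U hU
  have : M.indicator h ⁻¹' U = (V ∩ M) ∪ (Mᶜ ∩ {_x : Euc p | (0 : Euc p) ∈ U}) := by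
    ext x
    by_cases hx : x ∈ M
    · have hxval : M.indicator h x = h x := Set.indicator_of_mem hx _
      simp only [Set.mem_preimage, hxval, Set.mem_union, Set.mem_inter_iff, Set.mem_compl_iff,
        Set.mem_setOf_eq, hx, not_true, false_and, or_false, and_true]
      constructor
      · intro hhx
        have : x ∈ h ⁻¹' U ∩ M := ⟨hhx, hx⟩
        rw [hVeq] at this; exact this.1
      · intro hxV
        have : x ∈ V ∩ M := ⟨hxV, hx⟩
        rw [← hVeq] at this; exact this.1
    · have hxval : M.indicator h x = 0 := Set.indicator_of_notMem hx _
      simp [Set.mem_preimage, hxval, hx]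
  rw [this]
  exact (hV.measurableSet.inter hM.measurableSet).union
    (hM.measurableSet.compl.inter (MeasurableSet.const _))

lemma bdd_integrable {α E : Type*} [MeasurableSpace α] {μ : Measure α} [IsFiniteMeasure μ]
    [NormedAddCommGroup E] {h : α → E} (hm : AEStronglyMeasurable h μ) {C : ℝ}
    (hb : ∀ x, ‖h x‖ ≤ C) : Integrable h μ :=
  (integrable_const C).mono' hm (ae_of_all _ hb)

lemma denergy_eq {p n : ℕ} (y : Fin n → Euc p) :
    denergy y = (1 / ((n:ℝ) * ((n:ℝ) - 1))) *
      (2 * n * (∑ i, ‖y i‖^2) - 2 * ‖∑ i, y i‖^2) := by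
  unfold denergy
  congr 1
  have h1 : ∀ i j : Fin n, (if i ≠ j then ‖y i - y j‖^2 else 0) = ‖y i - y j‖^2 := by
    intro i j
    by_cases h : i = j
    · subst h; simp
    · simp [h]
  simp only [h1]
  have expand : ∀ i j : Fin n, ‖y i - y j‖^2 = ‖y i‖^2 - 2*⟪y i, y j⟫ + ‖y j‖^2 :=
    fun i j => norm_sub_sq_real _ _
  simp only [expand]
  have step1 : ∀ i : Fin n,
      ∑ j : Fin n, (‖y i‖^2 - 2*⟪y i, y j⟫ + ‖y j‖^2)
        = (n:ℝ)*‖y i‖^2 - 2*⟪y i, ∑ j, y j⟫ + ∑ j, ‖y j‖^2 := by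
    intro i
    rw [Finset.sum_add_distrib, Finset.sum_sub_distrib, Finset.sum_const, ← Finset.mul_sum,
      inner_sum]
    simp [nsmul_eq_mul]
  simp only [step1]
  rw [Finset.sum_add_distrib, Finset.sum_sub_distrib, Finset.sum_const]
  simp only [← Finset.mul_sum, ← sum_inner, nsmul_eq_mul, Finset.card_univ, Fintype.card_fin]
  rw [real_inner_self_eq_norm_sq]
  ring

lemma energy_eq {p : ℕ} (μ : Measure (Euc p)) [IsProbabilityMeasure μ]
    {g : Euc p → Euc p} (hm : Measurable g) {D : ℝ} (hb : ∀ x, ‖g x‖ ≤ D) :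
    energy μ g = 2 * (∫ x, ‖g x‖^2 ∂μ) - 2 * ‖∫ x, g x ∂μ‖^2 := by
  have hint : Integrable g μ := bdd_integrable hm.aestronglyMeasurable hb
  have hb2 : ∀ x, ‖‖g x‖^2‖ ≤ D^2 := by
    intro x
    rw [Real.norm_eq_abs, abs_of_nonneg (by positivity)]
    exact pow_le_pow_left₀ (norm_nonneg _) (hb x) 2
  have hint2 : Integrable (fun x => ‖g x‖^2) μ :=
    bdd_integrable (hm.norm.pow_const 2).aestronglyMeasurable hb2
  set m1 : Euc p := ∫ x, g x ∂μ with hm1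
  set m2 : ℝ := ∫ x, ‖g x‖^2 ∂μ with hm2
  have key : ∀ x : Euc p, (∫ x', ‖g x - g x'‖^2 ∂μ) = ‖g x‖^2 + m2 - 2 * ⟪g x, m1⟫ := by
    intro x
    have e1 : ∀ x' : Euc p, ‖g x - g x'‖^2 = ‖g x‖^2 - 2 * ⟪g x, g x'⟫ + ‖g x'‖^2 := by
      intro x'
      rw [norm_sub_sq_real]
    simp only [e1]
    have h2i : Integrable (fun x' => ⟪g x, g x'⟫) μ := hint.const_inner _
    have A : (∫ x', (‖g x‖^2 - 2 * ⟪g x, g x'⟫ + ‖g x'‖^2) ∂μ)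
        = (∫ x', (‖g x‖^2 - 2 * ⟪g x, g x'⟫) ∂μ) + ∫ x', ‖g x'‖^2 ∂μ :=
      integral_add ((integrable_const _).sub (h2i.const_mul 2)) hint2
    have B : (∫ x', (‖g x‖^2 - 2 * ⟪g x, g x'⟫) ∂μ)
        = (∫ _x' : Euc p, ‖g x‖^2 ∂μ) - ∫ x', 2 * ⟪g x, g x'⟫ ∂μ :=
      integral_sub (integrable_const _) (h2i.const_mul 2)
    have C : (∫ x', 2 * ⟪g x, g x'⟫ ∂μ) = 2 * ⟪g x, m1⟫ := by
      rw [integral_const_mul, integral_inner hint]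
    rw [A, B, C, integral_const]
    simp only [measure_univ, probReal_univ, ENNReal.toReal_one, one_smul]
    rw [← hm2]
    ring
  have hkey2 : energy μ g = ∫ x, (‖g x‖^2 + m2 - 2 * ⟪g x, m1⟫) ∂μ := by
    unfold energy
    exact integral_congr_ae (ae_of_all _ fun x => key x)
  rw [hkey2]
  have hinner : Integrable (fun x => ⟪g x, m1⟫) μ := hint.inner_const _
  have A : (∫ x, (‖g x‖^2 + m2 - 2 * ⟪g x, m1⟫) ∂μ)
      = (∫ x, (‖g x‖^2 + m2) ∂μ) - ∫ x, 2 * ⟪g x, m1⟫ ∂μ :=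
    integral_sub (hint2.add (integrable_const _)) (hinner.const_mul 2)
  have B : (∫ x, (‖g x‖^2 + m2) ∂μ) = m2 + m2 := by
    rw [integral_add hint2 (integrable_const _), integral_const]
    simp only [measure_univ, probReal_univ, ENNReal.toReal_one, one_smul]
    rfl
  have C : (∫ x, 2 * ⟪g x, m1⟫ ∂μ) = 2 * ‖m1‖^2 := by
    rw [integral_const_mul]
    have comm : (∫ x, ⟪g x, m1⟫ ∂μ) = ∫ x, ⟪m1, g x⟫ ∂μ := by
      congr 1
      funext x
      exact real_inner_comm _ _
    rw [comm, integral_inner hint, real_inner_self_eq_norm_sq]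
  rw [A, B, C]
  ring

lemma abs_norm_sq_sub_le {E : Type*} [NormedAddCommGroup E] (a b : E) :
    |‖a‖^2 - ‖b‖^2| ≤ (‖a‖ + ‖b‖) * ‖a - b‖ := by
  have h1 : ‖a‖^2 - ‖b‖^2 = (‖a‖ + ‖b‖) * (‖a‖ - ‖b‖) := by ring
  rw [h1, abs_mul, abs_of_nonneg (by positivity)]
  exact mul_le_mul_of_nonneg_left (abs_norm_sub_norm_le a b) (by positivity)

lemma denergy_comp {p n : ℕ} {y y' : Fin n → Euc p} {D η : ℝ} (hD : 0 ≤ D) (hη : 0 ≤ η)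
    (h1 : ∀ i, ‖y i‖ ≤ D) (h2 : ∀ i, ‖y' i‖ ≤ D) (h3 : ∀ i, ‖y i - y' i‖ ≤ η) :
    |denergy y - denergy y'| ≤ 8 * D * η := by
  have hterm : ∀ i j : Fin n,
      |(if i ≠ j then ‖y i - y j‖^2 else 0) - (if i ≠ j then ‖y' i - y' j‖^2 else 0)|
        ≤ (if i ≠ j then 8 * D * η else 0) := by
    intro i j
    by_cases h : i = j
    · simp [h]
    · simp only [h, ne_eq, not_false_eq_true, if_true]
      calc |‖y i - y j‖^2 - ‖y' i - y' j‖^2|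
          ≤ (‖y i - y j‖ + ‖y' i - y' j‖) * ‖(y i - y j) - (y' i - y' j)‖ :=
            abs_norm_sq_sub_le _ _
        _ ≤ (2 * D + 2 * D) * (2 * η) := by
            apply mul_le_mul _ _ (norm_nonneg _) (by positivity)
            · have := norm_sub_le (y i) (y j)
              have := norm_sub_le (y' i) (y' j)
              have := h1 i; have := h1 j; have := h2 i; have := h2 j
              linarith [norm_sub_le (y i) (y j), norm_sub_le (y' i) (y' j)]
            · have e : (y i - y j) - (y' i - y' j) = (y i - y' i) - (y j - y' j) := by abel
              rw [e]
              calc ‖(y i - y' i) - (y j - y' j)‖ ≤ ‖y i - y' i‖ + ‖y j - y' j‖ :=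
                    norm_sub_le _ _
                _ ≤ η + η := add_le_add (h3 i) (h3 j)
                _ = 2 * η := by ring
        _ = 8 * D * η := by ring
  unfold denergy
  rw [← mul_sub, ← Finset.sum_sub_distrib]
  simp only [← Finset.sum_sub_distrib]
  rw [abs_mul]
  have hc : |1 / ((n:ℝ) * ((n:ℝ) - 1))| = 1 / ((n:ℝ) * ((n:ℝ) - 1)) := by
    rw [abs_of_nonneg]
    apply div_nonneg zero_le_one
    rcases Nat.eq_zero_or_pos n with h | h
    · simp [h]
    · have : (1:ℝ) ≤ (n:ℝ) := by exact_mod_cast h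
      nlinarith
  rw [hc]
  have hsum : |∑ i : Fin n, ∑ j : Fin n,
      ((if i ≠ j then ‖y i - y j‖^2 else 0) - (if i ≠ j then ‖y' i - y' j‖^2 else 0))|
      ≤ ((n:ℝ) * ((n:ℝ) - 1)) * (8 * D * η) := by
    calc |∑ i : Fin n, ∑ j : Fin n,
        ((if i ≠ j then ‖y i - y j‖^2 else 0) - (if i ≠ j then ‖y' i - y' j‖^2 else 0))|
        ≤ ∑ i : Fin n, |∑ j : Fin n,
            ((if i ≠ j then ‖y i - y j‖^2 else 0) - (if i ≠ j then ‖y' i - y' j‖^2 else 0))| :=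
          Finset.abs_sum_le_sum_abs _ _
      _ ≤ ∑ i : Fin n, ∑ j : Fin n,
            |(if i ≠ j then ‖y i - y j‖^2 else 0) - (if i ≠ j then ‖y' i - y' j‖^2 else 0)| :=
          Finset.sum_le_sum fun i _ => Finset.abs_sum_le_sum_abs _ _
      _ ≤ ∑ i : Fin n, ∑ j : Fin n, (if i ≠ j then 8 * D * η else 0) :=
          Finset.sum_le_sum fun i _ => Finset.sum_le_sum fun j _ => hterm i j
      _ = ((n:ℝ) * ((n:ℝ) - 1)) * (8 * D * η) := by
          have hrow : ∀ i : Fin n, ∑ j : Fin n, (if i ≠ j then 8 * D * η else 0)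
              = ((n:ℝ) - 1) * (8 * D * η) := by
            intro i
            have : ∀ j : Fin n, (if i ≠ j then 8 * D * η else 0)
                = 8 * D * η - (if j = i then 8 * D * η else 0) := by
              intro j
              by_cases h : j = i
              · simp [h]
              · simp [h, Ne.symm h]
            simp only [this]
            rw [Finset.sum_sub_distrib, Finset.sum_const, Finset.sum_ite_eq' Finset.univ i
              (fun _ => 8 * D * η)]
            simp only [Finset.mem_univ, if_true, nsmul_eq_mul, Finset.card_univ,
              Fintype.card_fin]
            have hn : 1 ≤ n := Nat.one_le_iff_ne_zero.2 (by
              rintro rfl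
              exact absurd i.2 (by simp))
            ring
          simp only [hrow, Finset.sum_const, nsmul_eq_mul, Finset.card_univ, Fintype.card_fin]
          ring
  calc 1 / ((n:ℝ) * ((n:ℝ) - 1)) * |∑ i : Fin n, ∑ j : Fin n,
        ((if i ≠ j then ‖y i - y j‖^2 else 0) - (if i ≠ j then ‖y' i - y' j‖^2 else 0))|
      ≤ 1 / ((n:ℝ) * ((n:ℝ) - 1)) * (((n:ℝ) * ((n:ℝ) - 1)) * (8 * D * η)) := by
        apply mul_le_mul_of_nonneg_left hsum
        apply div_nonneg zero_le_one
        rcases Nat.eq_zero_or_pos n with h | h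
        · simp [h]
        · have : (1:ℝ) ≤ (n:ℝ) := by exact_mod_cast h
          nlinarith
    _ ≤ 8 * D * η := by
        rcases eq_or_ne ((n:ℝ) * ((n:ℝ) - 1)) 0 with h | h
        · rw [h]
          simp
          positivity
        · rw [one_div, inv_mul_cancel_left₀ h]

lemma energy_comp {p : ℕ} {μ : Measure (Euc p)} [IsProbabilityMeasure μ]
    {g g' : Euc p → Euc p} (hm : Measurable g) (hm' : Measurable g')
    {D η : ℝ} (hD : 0 ≤ D) (hη : 0 ≤ η)
    (hb : ∀ x, ‖g x‖ ≤ D) (hb' : ∀ x, ‖g' x‖ ≤ D)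
    (hd : ∀ᵐ x ∂μ, ‖g x - g' x‖ ≤ η) :
    |energy μ g - energy μ g'| ≤ 8 * D * η := by
  have hint : Integrable g μ := bdd_integrable hm.aestronglyMeasurable hb
  have hint' : Integrable g' μ := bdd_integrable hm'.aestronglyMeasurable hb'
  have hb2 : ∀ x, ‖‖g x‖^2‖ ≤ D^2 := fun x => by
    rw [Real.norm_eq_abs, abs_of_nonneg (by positivity)]
    exact pow_le_pow_left₀ (norm_nonneg _) (hb x) 2
  have hb2' : ∀ x, ‖‖g' x‖^2‖ ≤ D^2 := fun x => by
    rw [Real.norm_eq_abs, abs_of_nonneg (by positivity)]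
    exact pow_le_pow_left₀ (norm_nonneg _) (hb' x) 2
  have hint2 : Integrable (fun x => ‖g x‖^2) μ :=
    bdd_integrable (hm.norm.pow_const 2).aestronglyMeasurable hb2
  have hint2' : Integrable (fun x => ‖g' x‖^2) μ :=
    bdd_integrable (hm'.norm.pow_const 2).aestronglyMeasurable hb2'
  rw [energy_eq μ hm hb, energy_eq μ hm' hb']
  set m1 := ∫ x, g x ∂μ
  set m1' := ∫ x, g' x ∂μ
  set m2 := ∫ x, ‖g x‖^2 ∂μ
  set m2' := ∫ x, ‖g' x‖^2 ∂μ
  have hm1D : ‖m1‖ ≤ D := by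
    calc ‖m1‖ ≤ ∫ x, ‖g x‖ ∂μ := norm_integral_le_integral_norm _
      _ ≤ ∫ _x : Euc p, D ∂μ := integral_mono_ae hint.norm (integrable_const _)
          (ae_of_all _ hb)
      _ = D := by simp [measure_univ]
  have hm1D' : ‖m1'‖ ≤ D := by
    calc ‖m1'‖ ≤ ∫ x, ‖g' x‖ ∂μ := norm_integral_le_integral_norm _
      _ ≤ ∫ _x : Euc p, D ∂μ := integral_mono_ae hint'.norm (integrable_const _)
          (ae_of_all _ hb')
      _ = D := by simp [measure_univ]
  have hm2diff : |m2 - m2'| ≤ 2 * D * η := by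
    rw [← integral_sub hint2 hint2']
    calc |∫ x, (‖g x‖^2 - ‖g' x‖^2) ∂μ| ≤ ∫ x, |‖g x‖^2 - ‖g' x‖^2| ∂μ := by
          rw [← Real.norm_eq_abs]
          exact (norm_integral_le_integral_norm _).trans (le_of_eq (by
            congr 1))
      _ ≤ ∫ _x : Euc p, 2 * D * η ∂μ := by
          apply integral_mono_ae ((hint2.sub hint2').abs) (integrable_const _)
          filter_upwards [hd] with x hx
          calc |‖g x‖^2 - ‖g' x‖^2| ≤ (‖g x‖ + ‖g' x‖) * ‖g x - g' x‖ :=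
                abs_norm_sq_sub_le _ _
            _ ≤ (D + D) * η := by
                apply mul_le_mul (add_le_add (hb x) (hb' x)) hx (norm_nonneg _)
                  (by linarith)
            _ = 2 * D * η := by ring
      _ = 2 * D * η := by simp [measure_univ]
  have hm1diff : ‖m1 - m1'‖ ≤ η := by
    rw [← integral_sub hint hint']
    calc ‖∫ x, (g x - g' x) ∂μ‖ ≤ ∫ x, ‖g x - g' x‖ ∂μ := norm_integral_le_integral_norm _
      _ ≤ ∫ _x : Euc p, η ∂μ := integral_mono_ae (hint.sub hint').norm (integrable_const _) hd
      _ = η := by simp [measure_univ]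
  have hsq : |‖m1‖^2 - ‖m1'‖^2| ≤ 2 * D * η := by
    calc |‖m1‖^2 - ‖m1'‖^2| ≤ (‖m1‖ + ‖m1'‖) * ‖m1 - m1'‖ := abs_norm_sq_sub_le _ _
      _ ≤ (D + D) * η := by
          apply mul_le_mul (add_le_add hm1D hm1D') hm1diff (norm_nonneg _) (by linarith)
      _ = 2 * D * η := by ring
  calc |2 * m2 - 2 * ‖m1‖^2 - (2 * m2' - 2 * ‖m1'‖^2)|
      = |2 * (m2 - m2') - 2 * (‖m1‖^2 - ‖m1'‖^2)| := by ring_nf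
    _ ≤ |2 * (m2 - m2')| + |2 * (‖m1‖^2 - ‖m1'‖^2)| := abs_sub _ _
    _ = 2 * |m2 - m2'| + 2 * |‖m1‖^2 - ‖m1'‖^2| := by
        rw [abs_mul, abs_mul]
        norm_num
    _ ≤ 2 * (2 * D * η) + 2 * (2 * D * η) := by
        have := hm2diff; have := hsq
        linarith
    _ = 8 * D * η := by ring

lemma den_tendsto {p : ℕ} {Ω : Type*} [MeasureSpace Ω] [IsProbabilityMeasure (ℙ : Measure Ω)]
    (μ : Measure (Euc p)) [IsProbabilityMeasure μ]
    (X : ℕ → Ω → Euc p) (hXmeas : ∀ i, Measurable (X i))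
    (hXindep : iIndepFun X ℙ)
    (hXdist : ∀ i, Measure.map (X i) ℙ = μ)
    {P : Euc p → Euc p} (hPm : Measurable P) {D : ℝ} (hPb : ∀ x, ‖P x‖ ≤ D) :
    ∀ᵐ ω ∂(ℙ : Measure Ω),
      Tendsto (fun n => denergy (fun i : Fin n => P (X i ω))) atTop (𝓝 (energy μ P)) := by
  have hQm : Measurable (fun x : Euc p => ‖P x‖^2) := hPm.norm.pow_const 2
  have hQb : ∀ x, ‖‖P x‖^2‖ ≤ D^2 := fun x => by
    rw [Real.norm_eq_abs, abs_of_nonneg (by positivity)]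
    exact pow_le_pow_left₀ (norm_nonneg _) (hPb x) 2
  have hident : ∀ i, IdentDistrib (X i) (X 0) ℙ ℙ := fun i =>
    ⟨(hXmeas i).aemeasurable, (hXmeas 0).aemeasurable, by rw [hXdist i, hXdist 0]⟩
  have hv := strong_law_ae (fun i ω => P (X i ω))
    (bdd_integrable (hPm.comp (hXmeas 0)).aestronglyMeasurable fun ω => hPb _)
    (fun i j hij => (hXindep.indepFun hij).comp hPm hPm)
    (fun i => (hident i).comp hPm)
  have hr := strong_law_ae (fun i ω => ‖P (X i ω)‖^2)
    (bdd_integrable (hQm.comp (hXmeas 0)).aestronglyMeasurable fun ω => hQb _)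
    (fun i j hij => (hXindep.indepFun hij).comp hQm hQm)
    (fun i => (hident i).comp hQm)
  have e1 : (∫ ω, P (X 0 ω) ∂(ℙ : Measure Ω)) = ∫ x, P x ∂μ := by
    rw [← hXdist 0, integral_map (hXmeas 0).aemeasurable hPm.aestronglyMeasurable]
  have e2 : (∫ ω, ‖P (X 0 ω)‖^2 ∂(ℙ : Measure Ω)) = ∫ x, ‖P x‖^2 ∂μ := by
    rw [← hXdist 0, integral_map (hXmeas 0).aemeasurable hQm.aestronglyMeasurable]
  rw [show (ℙ : Measure Ω)[fun ω => P (X 0 ω)] = ∫ x, P x ∂μ from e1] at hv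
  rw [show (ℙ : Measure Ω)[fun ω => ‖P (X 0 ω)‖^2] = ∫ x, ‖P x‖^2 ∂μ from e2] at hr
  filter_upwards [hv, hr] with ω hvω hrω
  set m1 := ∫ x, P x ∂μ
  set m2 := ∫ x, ‖P x‖^2 ∂μ
  -- the coefficient 2n/(n-1) tends to 2
  have t0 : Tendsto (fun n : ℕ => ((n:ℝ) - 1)) atTop atTop := by
    have := tendsto_atTop_add_const_right atTop (-1 : ℝ) tendsto_natCast_atTop_atTop
    simpa [sub_eq_add_neg] using this
  have t1 : Tendsto (fun n : ℕ => ((n:ℝ) - 1)⁻¹) atTop (𝓝 0) := t0.inv_tendsto_atTop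
  have t2 : Tendsto (fun n : ℕ => 2 * (1 + ((n:ℝ) - 1)⁻¹)) atTop (𝓝 (2 * (1 + 0))) :=
    (tendsto_const_nhds.add t1).const_mul 2
  have hnormsq : Tendsto (fun n : ℕ => ‖(n:ℝ)⁻¹ • ∑ i ∈ Finset.range n, P (X i ω)‖^2)
      atTop (𝓝 (‖m1‖^2)) := (hvω.norm).pow 2
  have hmain : Tendsto (fun n : ℕ => (2 * (1 + ((n:ℝ) - 1)⁻¹)) *
      ((n:ℝ)⁻¹ • (∑ i ∈ Finset.range n, ‖P (X i ω)‖^2) -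
        ‖(n:ℝ)⁻¹ • ∑ i ∈ Finset.range n, P (X i ω)‖^2))
      atTop (𝓝 ((2 * (1 + 0)) * (m2 - ‖m1‖^2))) := t2.mul (hrω.sub hnormsq)
  have hlim : (2 * ((1:ℝ) + 0)) * (m2 - ‖m1‖^2) = energy μ P := by
    rw [energy_eq μ hPm hPb]
    ring
  rw [hlim] at hmain
  apply hmain.congr'
  filter_upwards [eventually_ge_atTop 2] with n hn
  have hn1 : (1:ℝ) ≤ (n:ℝ) - 1 := by
    have : (2:ℝ) ≤ (n:ℝ) := by exact_mod_cast hn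
    linarith
  have hne : ((n:ℝ) - 1) ≠ 0 := by linarith
  have hnne : (n:ℝ) ≠ 0 := by
    have : (2:ℝ) ≤ (n:ℝ) := by exact_mod_cast hn
    linarith
  rw [denergy_eq]
  rw [show ∀ m : Fin n → ℝ, (∑ i, m i) = ∑ i, m i from fun _ => rfl]
  have hsum1 : (∑ i : Fin n, ‖P (X (i : ℕ) ω)‖^2) = ∑ i ∈ Finset.range n, ‖P (X i ω)‖^2 :=
    Fin.sum_univ_eq_sum_range (fun i => ‖P (X i ω)‖^2) n
  have hsum2 : (∑ i : Fin n, P (X (i : ℕ) ω)) = ∑ i ∈ Finset.range n, P (X i ω) :=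
    Fin.sum_univ_eq_sum_range (fun i => P (X i ω)) n
  rw [hsum1, hsum2]
  set S2 := ∑ i ∈ Finset.range n, ‖P (X i ω)‖^2
  set S := ∑ i ∈ Finset.range n, P (X i ω)
  have hnorm : ‖(n:ℝ)⁻¹ • S‖^2 = ((n:ℝ)⁻¹)^2 * ‖S‖^2 := by
    rw [norm_smul, mul_pow, Real.norm_eq_abs, abs_of_nonneg (by positivity)]
  rw [smul_eq_mul, hnorm]
  field_simp
  ring
end

/-- **Uniform law of large numbers over `F_1` (equation (2.18)).**  The supremum over `F_1`
of the deviation between empirical and continuum energies converges to zero almost surely. -/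
theorem empirical_energy_uniform_lln
    {p : ℕ} {Ω : Type*} [MeasureSpace Ω] [IsProbabilityMeasure (ℙ : Measure Ω)]
    (μ : Measure (Euc p)) [IsProbabilityMeasure μ]
    (M : Set (Euc p)) (hMcpt : IsCompact M) (hMconn : IsConnected M)
    (hMfull : μ M = 1)
    (hMsupp : ∀ x ∈ M, ∀ ε > 0, 0 < μ (Metric.ball x ε))
    (c : ℝ → ℝ) (hreg : RegularityAssumption M c)
    (X : ℕ → Ω → Euc p) (hXmeas : ∀ i, Measurable (X i))
    (hXindep : iIndepFun X ℙ)
    (hXdist : ∀ i, Measure.map (X i) ℙ = μ) :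
    ∀ᵐ ω ∂(ℙ : Measure Ω),
      Tendsto
        (fun n => sSup ((fun f => |denergy (fun i : Fin n => f (X i ω)) - energy μ f|)
          '' FL M 1))
        atTop (nhds 0) := by
  classical
  obtain ⟨hc0, hcmono, -, hcbound⟩ := hreg
  obtain ⟨x₀, hx₀⟩ := hMconn.nonempty
  set R : ℝ := Metric.diam M with hR
  have hR0 : 0 ≤ R := Metric.diam_nonneg
  set L' : ℝ := 1 + c R with hL'
  have hL'1 : (1:ℝ) ≤ L' := le_add_of_nonneg_right (hc0 R)
  have hL'0 : (0:ℝ) < L' := lt_of_lt_of_le one_pos hL'1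
  set D : ℝ := L' * R with hD
  have hD0 : 0 ≤ D := mul_nonneg hL'0.le hR0
  have hMmeas : MeasurableSet M := hMcpt.isClosed.measurableSet
  have hμMc : μ Mᶜ = 0 := by
    rw [measure_compl hMmeas (by rw [hMfull]; exact ENNReal.one_ne_top), hMfull, measure_univ]
    simp
  have haeM : ∀ᵐ x ∂μ, x ∈ M := by
    rw [ae_iff]
    exact hμMc
  -- Lipschitz and boundedness of elements of FL M 1
  have hFLlip : ∀ f ∈ FL M 1, ∀ x ∈ M, ∀ x' ∈ M, ‖f x - f x'‖ ≤ L' * ‖x - x'‖ := by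
    intro f hf x hx x' hx'
    have hxx' : ‖x - x'‖ ≤ R := by
      rw [← dist_eq_norm]
      exact Metric.dist_le_diam_of_mem hMcpt.isBounded hx hx'
    have hcc : c ‖x - x'‖ ≤ c R :=
      hcmono (Set.mem_Ici.2 (norm_nonneg _)) (Set.mem_Ici.2 hR0) hxx'
    calc ‖f x - f x'‖ ≤ 1 * intrinsicDist M x x' := hf x hx x' hx'
      _ ≤ (1 + c ‖x - x'‖) * ‖x - x'‖ := by rw [one_mul]; exact hcbound x hx x' hx'
      _ ≤ L' * ‖x - x'‖ := mul_le_mul_of_nonneg_right (by rw [hL']; linarith) (norm_nonneg _)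
  have hFLbnd : ∀ f ∈ FL M 1, ∀ x ∈ M, ‖f x - f x₀‖ ≤ D := by
    intro f hf x hx
    have h1 := hFLlip f hf x hx x₀ hx₀
    have hxx' : ‖x - x₀‖ ≤ R := by
      rw [← dist_eq_norm]
      exact Metric.dist_le_diam_of_mem hMcpt.isBounded hx hx₀
    calc ‖f x - f x₀‖ ≤ L' * ‖x - x₀‖ := h1
      _ ≤ L' * R := mul_le_mul_of_nonneg_left hxx' hL'0.le
  -- nets
  set δ : ℕ → ℝ := fun k => 1 / ((k:ℝ) + 1) with hδdef
  have hδpos : ∀ k, 0 < δ k := fun k => by positivity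
  have hZex : ∀ k : ℕ, ∃ Z : Finset (Euc p), (↑Z : Set (Euc p)) ⊆ M ∧
      ∀ x ∈ M, ∃ z ∈ Z, dist x z < δ k := by
    intro k
    obtain ⟨t, hts, htf, htc⟩ :=
      finite_approx_of_totallyBounded hMcpt.totallyBounded (δ k) (hδpos k)
    refine ⟨htf.toFinset, by simpa using hts, fun x hx => ?_⟩
    obtain ⟨z, hz, hxz⟩ := Set.mem_iUnion₂.1 (htc hx)
    exact ⟨z, htf.mem_toFinset.2 hz, Metric.mem_ball.1 hxz⟩
  have hWex : ∀ k : ℕ, ∃ W : Finset (Euc p),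
      (↑W : Set (Euc p)) ⊆ Metric.closedBall 0 D ∧
      ∀ x ∈ Metric.closedBall (0 : Euc p) D, ∃ w ∈ W, dist x w < δ k := by
    intro k
    obtain ⟨t, hts, htf, htc⟩ := finite_approx_of_totallyBounded
      (isCompact_closedBall (0 : Euc p) D).totallyBounded (δ k) (hδpos k)
    refine ⟨htf.toFinset, by simpa using hts, fun x hx => ?_⟩
    obtain ⟨z, hz, hxz⟩ := Set.mem_iUnion₂.1 (htc hx)
    exact ⟨z, htf.mem_toFinset.2 hz, Metric.mem_ball.1 hxz⟩
  choose Z hZM hZc using hZex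
  choose W hWb hWc using hWex
  -- net functions
  let A : ℕ → Type := fun k => {z // z ∈ Z k} → {w // w ∈ W k}
  let Lst : ∀ k, A k → List (Euc p × Euc p) := fun k a =>
    ((Z k).attach.toList).map (fun z : {z // z ∈ Z k} => (z.1, (a z).1))
  let P : ∀ k, A k → Euc p → Euc p := fun k a => pApprox (δ k) (Lst k a)
  have hPm : ∀ k a, Measurable (P k a) := fun k a => pApprox_measurable _ _
  have hPb : ∀ k a x, ‖P k a x‖ ≤ D := by
    intro k a x
    apply pApprox_norm_le _ hD0
    intro zw hzw
    obtain ⟨z, hz, rfl⟩ := List.mem_map.1 hzw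
    have hw : (a z).1 ∈ Metric.closedBall (0 : Euc p) D := hWb k (a z).2
    rwa [Metric.mem_closedBall, dist_zero_right] at hw
  -- almost sure event
  have hae : ∀ᵐ ω ∂(ℙ : Measure Ω), (∀ i, X i ω ∈ M) ∧ ∀ k : ℕ, ∀ a : A k,
      Tendsto (fun n => denergy (fun i : Fin n => P k a (X i ω))) atTop
        (𝓝 (energy μ (P k a))) := by
    refine Filter.Eventually.and (ae_all_iff.2 fun i => ?_)
      (ae_all_iff.2 fun k => ae_all_iff.2 fun a =>
        den_tendsto μ X hXmeas hXindep hXdist (hPm k a) (hPb k a))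
    have h0 : (ℙ : Measure Ω) (X i ⁻¹' Mᶜ) = 0 := by
      rw [← Measure.map_apply (hXmeas i) hMmeas.compl, hXdist i]
      exact hμMc
    rw [ae_iff]
    exact h0
  filter_upwards [hae] with ω hω
  obtain ⟨hωM, hωconv⟩ := hω
  rw [Metric.tendsto_atTop]
  intro ε hε
  -- choose the net resolution
  have hden : (0:ℝ) < 64 * (D + 1) * (L' + 1) := by positivity
  obtain ⟨k, hk⟩ := exists_nat_one_div_lt (show (0:ℝ) < ε / (64 * (D + 1) * (L' + 1)) by
    positivity)
  set η : ℝ := (L' + 1) * δ k with hη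
  have hη0 : 0 ≤ η := mul_nonneg (by linarith) (hδpos k).le
  have h16 : 16 * D * η ≤ ε / 4 := by
    have hδk : δ k * (64 * (D + 1) * (L' + 1)) < ε := by
      rw [← lt_div_iff₀ hden]
      simpa [hδdef] using hk
    have e1 : 16 * D * η ≤ 16 * (D + 1) * η := by nlinarith [hη0]
    have e2 : 16 * (D + 1) * η = (δ k * (64 * (D + 1) * (L' + 1))) / 4 := by
      rw [hη]; ring
    calc 16 * D * η ≤ 16 * (D + 1) * η := e1
      _ = (δ k * (64 * (D + 1) * (L' + 1))) / 4 := e2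
      _ ≤ ε / 4 := (div_le_div_iff_of_pos_right (by norm_num : (0:ℝ) < 4)).2 hδk.le
  -- eventual bounds from convergence on the finite net
  have hev : ∀ᶠ n in atTop, ∀ a : A k,
      |denergy (fun i : Fin n => P k a (X i ω)) - energy μ (P k a)| < ε / 4 := by
    rw [eventually_all]
    intro a
    have := (hωconv k a).eventually (Metric.ball_mem_nhds (energy μ (P k a))
      (show (0:ℝ) < ε / 4 by positivity))
    filter_upwards [this] with n hn
    rw [Real.dist_eq] at hn
    exact hn
  obtain ⟨N, hN⟩ := eventually_atTop.1 hev
  refine ⟨N, fun n hn => ?_⟩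
  set S : ℝ := sSup ((fun f => |denergy (fun i : Fin n => f (X i ω)) - energy μ f|) '' FL M 1)
    with hS
  have hS0 : 0 ≤ S := Real.sSup_nonneg (by
    rintro v ⟨f, hf, rfl⟩
    exact abs_nonneg _)
  have hSle : S ≤ ε / 2 := by
    apply Real.sSup_le _ (by positivity)
    rintro v ⟨f, hf, rfl⟩
    -- centered version of f
    set g : Euc p → Euc p := M.indicator (fun x => f x - f x₀) with hg
    have hgM : ∀ x ∈ M, ∀ x' ∈ M, g x - g x' = f x - f x' := by
      intro x hx x' hx'
      rw [hg, Set.indicator_of_mem hx, Set.indicator_of_mem hx']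
      abel
    have hgb : ∀ x, ‖g x‖ ≤ D := by
      intro x
      by_cases hx : x ∈ M
      · rw [hg, Set.indicator_of_mem hx]
        exact hFLbnd f hf x hx
      · rw [hg, Set.indicator_of_notMem hx]
        simpa using hD0
    have hglip : ∀ x ∈ M, ∀ x' ∈ M, ‖g x - g x'‖ ≤ L' * ‖x - x'‖ := by
      intro x hx x' hx'
      rw [hgM x hx x' hx']
      exact hFLlip f hf x hx x' hx'
    have hgm : Measurable g := by
      apply measurable_indicator_of_closed hMcpt.isClosed
      have hlip : LipschitzOnWith (Real.toNNReal L') f M := by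
        rw [lipschitzOnWith_iff_dist_le_mul]
        intro x hx y hy
        rw [dist_eq_norm, dist_eq_norm, Real.coe_toNNReal L' hL'0.le]
        exact hFLlip f hf x hx y hy
      exact hlip.continuousOn.sub continuousOn_const
    have hE : energy μ f = energy μ g := by
      unfold energy
      apply integral_congr_ae
      filter_upwards [haeM] with x hx
      apply integral_congr_ae
      filter_upwards [haeM] with x' hx'
      rw [hgM x hx x' hx']
    have hdeneq : denergy (fun i : Fin n => f (X i ω)) =
        denergy (fun i : Fin n => g (X i ω)) := by
      unfold denergy
      congr 1
      apply Finset.sum_congr rfl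
      intro i _
      apply Finset.sum_congr rfl
      intro j _
      rw [hgM _ (hωM i) _ (hωM j)]
    -- choose the net assignment for g
    have hchoice : ∀ z : {z // z ∈ Z k}, ∃ w : {w // w ∈ W k},
        ‖w.1 - g z.1‖ ≤ δ k := by
      intro z
      have hgz : g z.1 ∈ Metric.closedBall (0 : Euc p) D := by
        rw [Metric.mem_closedBall, dist_zero_right]
        exact hgb _
      obtain ⟨w, hw, hww⟩ := hWc k _ hgz
      refine ⟨⟨w, hw⟩, ?_⟩
      rw [← dist_eq_norm, dist_comm]
      exact hww.le
    choose a ha using hchoice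
    have happrox : ∀ x ∈ M, ‖g x - P k a x‖ ≤ η := by
      intro x hx
      obtain ⟨z, hz, hxz⟩ := hZc k x hx
      have hmem : ∃ zw ∈ Lst k a, dist x zw.1 < δ k := by
        refine ⟨(z, (a ⟨z, hz⟩).1), ?_, hxz⟩
        exact List.mem_map.2 ⟨⟨z, hz⟩, Finset.mem_toList.2 (Finset.mem_attach _ _), rfl⟩
      obtain ⟨zw, hzwL, hxball, hPx⟩ := pApprox_exists _ _ _ hmem
      obtain ⟨z', hz', hzweq⟩ := List.mem_map.1 hzwL
      have hPeq : P k a x = zw.2 := hPx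
      rw [hPeq, ← hzweq]
      have hz'M : z'.1 ∈ M := hZM k z'.2
      have hxz' : ‖x - z'.1‖ < δ k := by
        rw [← dist_eq_norm]
        rw [← hzweq] at hxball
        exact hxball
      calc ‖g x - (a z').1‖
          = ‖(g x - g z'.1) - ((a z').1 - g z'.1)‖ := by congr 1; abel
        _ ≤ ‖g x - g z'.1‖ + ‖(a z').1 - g z'.1‖ := norm_sub_le _ _
        _ ≤ L' * ‖x - z'.1‖ + δ k := add_le_add (hglip x hx _ hz'M) (ha z')
        _ ≤ L' * δ k + δ k := by
            have := mul_le_mul_of_nonneg_left hxz'.le hL'0.le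
            linarith
        _ ≤ η := le_of_eq (by rw [hη]; ring)
    -- assemble the bound
    have c1 : |denergy (fun i : Fin n => g (X i ω)) -
        denergy (fun i : Fin n => P k a (X i ω))| ≤ 8 * D * η :=
      denergy_comp hD0 hη0 (fun i => hgb _) (fun i => hPb k a _)
        (fun i => happrox _ (hωM i))
    have c2 : |energy μ (P k a) - energy μ g| ≤ 8 * D * η := by
      rw [abs_sub_comm]
      apply energy_comp hgm (hPm k a) hD0 hη0 hgb (hPb k a)
      filter_upwards [haeM] with x hx
      exact happrox x hx
    have c3 := hN n hn a
    calc |denergy (fun i : Fin n => f (X i ω)) - energy μ f|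
        = |denergy (fun i : Fin n => g (X i ω)) - energy μ g| := by rw [hdeneq, hE]
      _ ≤ |denergy (fun i : Fin n => g (X i ω)) - denergy (fun i : Fin n => P k a (X i ω))| +
          |denergy (fun i : Fin n => P k a (X i ω)) - energy μ g| := abs_sub_le _ _ _
      _ ≤ |denergy (fun i : Fin n => g (X i ω)) - denergy (fun i : Fin n => P k a (X i ω))| +
          (|denergy (fun i : Fin n => P k a (X i ω)) - energy μ (P k a)| +
            |energy μ (P k a) - energy μ g|) := by
          have := abs_sub_le (denergy (fun i : Fin n => P k a (X i ω))) (energy μ (P k a))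
            (energy μ g)
          linarith
      _ ≤ 8 * D * η + (ε / 4 + 8 * D * η) := by
          have h1 := c1; have h2 := c2; have h3 := c3
          linarith
      _ ≤ ε / 2 := by linarith
  rw [Real.dist_eq, sub_zero, abs_of_nonneg hS0]
  linarith
end
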